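/- arXiv:2205.07189 — 4 statements merged into one kernel-verified Lean document; each statement's English description precedes it below -/
import Mathlib

section
/- Every 3-degenerate finite simple graph G with maximum degree Δ(G) ≥ 5 admits a vi-simultaneous (Δ(G)+5, 3)-coloring; consequently χ_{vi,3}(G) ≤ Δ(G) + 5. -/
open SimpleGraph

variable {V : Type*}

/-- An *incidence* of `G`: a pair `(v, e)` where `e` is an edge of `G` and `v ∈ e`. -/
abbrev Inc (G : SimpleGraph V) : Type _ :=
  {p : V × Sym2 V // p.2 ∈ G.edgeSet ∧ p.1 ∈ p.2}

/-- The elements to be colored in a vi-simultaneous coloring: vertices together with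
incidences. -/
abbrev VIElem (G : SimpleGraph V) : Type _ := V ⊕ Inc G

/-- Adjacency between elements of `V(G) ∪ I(G)`: two vertices are adjacent when they are
adjacent in `G`; a vertex `u` and an incidence `(w, f)` are adjacent when `u ∈ f`; two
distinct incidences `(v, e)`, `(w, f)` are adjacent when `v = w`, or `e = f`, or
`{v, w} = e`, or `{v, w} = f`. -/
def VIAdj (G : SimpleGraph V) : VIElem G → VIElem G → Prop
  | Sum.inl u, Sum.inl w => G.Adj u w
  | Sum.inl u, Sum.inr i => u ∈ i.1.2
  | Sum.inr i, Sum.inl u => u ∈ i.1.2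
  | Sum.inr i, Sum.inr j => i ≠ j ∧
      (i.1.1 = j.1.1 ∨ i.1.2 = j.1.2 ∨ s(i.1.1, j.1.1) = i.1.2 ∨ s(i.1.1, j.1.1) = j.1.2)

/-- A vi-simultaneous proper `k`-coloring of `G`: adjacent or incident elements of
`V(G) ∪ I(G)` receive distinct colors. -/
def IsVIColoring (G : SimpleGraph V) {k : ℕ} (c : VIElem G → Fin k) : Prop :=
  ∀ a b, VIAdj G a b → c a ≠ c b

/-- The vi-simultaneous chromatic number `χ_vi(G)`: the least `k` admitting a
vi-simultaneous proper `k`-coloring. -/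
noncomputable def chiVI (G : SimpleGraph V) : ℕ :=
  sInf {k | ∃ c : VIElem G → Fin k, IsVIColoring G c}

/-- `I₂(v)`: the set of second incidences of a vertex `v`, i.e. incidences `(u, e)` with
`e = {u, v}` and `u ≠ v`. -/
def I2 (G : SimpleGraph V) (v : V) : Set (Inc G) :=
  {i | i.1.1 ≠ v ∧ i.1.2 = s(i.1.1, v)}

/-- A vi-simultaneous `(k, s)`-coloring: a vi-simultaneous proper `k`-coloring in which at
most `s` distinct colors appear on `I₂(v)` for every vertex `v`. -/
def IsVISColoring (G : SimpleGraph V) (s : ℕ) {k : ℕ} (c : VIElem G → Fin k) : Prop :=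
  IsVIColoring G c ∧ ∀ v : V, ((fun i => c (Sum.inr i)) '' I2 G v).ncard ≤ s

/-- `χ_{vi,s}(G)`: the least `k` admitting a vi-simultaneous `(k, s)`-coloring. -/
noncomputable def chiVIS (G : SimpleGraph V) (s : ℕ) : ℕ :=
  sInf {k | ∃ c : VIElem G → Fin k, IsVISColoring G s c}

/-- The maximum degree `Δ(G)` of a finite graph. -/
noncomputable def maxDeg [Fintype V] (G : SimpleGraph V) : ℕ :=
  Finset.univ.sup fun v => (G.neighborSet v).ncard

/-- A graph is `k`-degenerate if every (nonempty, induced) subgraph has a vertex of degree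
at most `k`; the degree of `v` in the subgraph induced on `s ∋ v` is `|N_G(v) ∩ s|`. -/
def Degenerate (k : ℕ) (G : SimpleGraph V) : Prop :=
  ∀ s : Set V, s.Nonempty → ∃ v ∈ s, (G.neighborSet v ∩ s).ncard ≤ k

section Infra

variable {β : Type*} (G : SimpleGraph V)

/-- The second endpoint of an incidence. -/
noncomputable def otherV (i : Inc G) : V := Sym2.Mem.other i.2.2

lemma other_edge (i : Inc G) : i.1.2 = s(i.1.1, otherV G i) :=
  (Sym2.other_spec i.2.2).symm

lemma other_adj (i : Inc G) : G.Adj i.1.1 (otherV G i) := by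
  have h := i.2.1
  rw [other_edge G i] at h
  exact (SimpleGraph.mem_edgeSet G).mp h

lemma other_ne (i : Inc G) : otherV G i ≠ i.1.1 := (other_adj G i).ne'

/-- Build an incidence from an adjacency. -/
def vinc {u w : V} (h : G.Adj u w) : Inc G :=
  ⟨(u, s(u, w)), ⟨(SimpleGraph.mem_edgeSet G).mpr h, Sym2.mem_mk_left u w⟩⟩

lemma vinc_fst {u w : V} (h : G.Adj u w) : (vinc G h).1.1 = u := rfl

lemma other_vinc {u w : V} (h : G.Adj u w) : otherV G (vinc G h) = w := by
  have he : s(u, w) = s(u, otherV G (vinc G h)) := other_edge G (vinc G h)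
  rcases Sym2.eq_iff.mp he.symm with ⟨_, h2⟩ | ⟨h1, h2⟩
  · exact h2
  · exact absurd h1 h.ne

lemma inc_ext (i j : Inc G) (h1 : i.1.1 = j.1.1) (h2 : otherV G i = otherV G j) : i = j := by
  apply Subtype.ext
  apply Prod.ext h1
  rw [other_edge G i, other_edge G j, h1, h2]

lemma inc_eq_vinc (i : Inc G) : i = vinc G (other_adj G i) := by
  apply inc_ext
  · rfl
  · rw [other_vinc]

lemma mem_edge_iff (i : Inc G) (u : V) : u ∈ i.1.2 ↔ u = i.1.1 ∨ u = otherV G i := by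
  rw [other_edge G i, Sym2.mem_iff]

end Infra

section Sets

variable {β : Type*} [DecidableEq β] [Fintype V] [DecidableEq V]
variable (G : SimpleGraph V) [DecidableRel G.Adj]

/-- The color of the incidence `(u, uw)` under `c` (junk if not adjacent). -/
def colInc (c : VIElem G → β) (u w : V) : β :=
  if h : G.Adj u w then c (Sum.inr (vinc G h)) else c (Sum.inl u)

lemma colInc_eval (c : VIElem G → β) {u w : V} (h : G.Adj u w) :
    colInc G c u w = c (Sum.inr (vinc G h)) := dif_pos h

lemma colInc_inc (c : VIElem G → β) (i : Inc G) :
    colInc G c i.1.1 (otherV G i) = c (Sum.inr i) := by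
  rw [colInc_eval G c (other_adj G i), ← inc_eq_vinc]

def nbrsIn (S : Finset V) (u : V) : Finset V := G.neighborFinset u ∩ S

def Bset (c : VIElem G → β) (S : Finset V) (u : V) : Finset β :=
  (nbrsIn G S u).image (fun w => colInc G c u w)

def Aset (c : VIElem G → β) (S : Finset V) (u : V) : Finset β :=
  (nbrsIn G S u).image (fun w => colInc G c w u)

lemma mem_Bset_of (c : VIElem G → β) (S : Finset V) (u : V) (j : Inc G)
    (hj1 : j.1.1 = u) (hj2 : otherV G j ∈ S) : c (Sum.inr j) ∈ Bset G c S u := by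
  subst hj1
  refine Finset.mem_image.mpr ⟨otherV G j, ?_, colInc_inc G c j⟩
  rw [nbrsIn, Finset.mem_inter, SimpleGraph.mem_neighborFinset]
  exact ⟨other_adj G j, hj2⟩

lemma mem_Aset_of (c : VIElem G → β) (S : Finset V) (u : V) (j : Inc G)
    (hj2 : otherV G j = u) (hj1 : j.1.1 ∈ S) : c (Sum.inr j) ∈ Aset G c S u := by
  refine Finset.mem_image.mpr ⟨j.1.1, ?_, ?_⟩
  · rw [nbrsIn, Finset.mem_inter, SimpleGraph.mem_neighborFinset]
    exact ⟨hj2 ▸ (other_adj G j).symm, hj1⟩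
  · rw [← hj2, colInc_inc]

/-- Which elements of `V(G) ∪ I(G)` are inside the induced part on `S`. -/
def InS (S : Finset V) : VIElem G → Prop
  | Sum.inl u => u ∈ S
  | Sum.inr i => i.1.1 ∈ S ∧ otherV G i ∈ S

/-- The inductive invariant: a partial vi-simultaneous coloring of the part induced on
`S`, with at most 3 colors on each partial `I₂(u)`. -/
def Good (c : VIElem G → β) (S : Finset V) : Prop :=
  (∀ a b, VIAdj G a b → InS G S a → InS G S b → c a ≠ c b) ∧
  (∀ u ∈ S, (Aset G c S u).card ≤ 3)

end Sets

section Extend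

set_option linter.unusedSectionVars false

variable {V : Type*} {β : Type*} [DecidableEq V]

/-- Extension of a coloring at a new vertex `v`. -/
noncomputable def extendCol (G : SimpleGraph V) (col : VIElem G → β) (v : V) (cv : β)
    (f s : V → β) : VIElem G → β := fun a =>
  match a with
  | Sum.inl u => if u = v then cv else col (Sum.inl u)
  | Sum.inr i => if i.1.1 = v then f (otherV G i)
      else if otherV G i = v then s i.1.1 else col (Sum.inr i)

variable (G : SimpleGraph V) (col : VIElem G → β) (v : V) (cv : β) (f s : V → β)

lemma extendCol_inl_v : extendCol G col v cv f s (Sum.inl v) = cv := by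
  simp [extendCol]

lemma extendCol_inl {u : V} (hu : u ≠ v) :
    extendCol G col v cv f s (Sum.inl u) = col (Sum.inl u) := by
  simp [extendCol, hu]

lemma extendCol_f {i : Inc G} (h : i.1.1 = v) :
    extendCol G col v cv f s (Sum.inr i) = f (otherV G i) := by
  simp [extendCol, h]

lemma extendCol_s {i : Inc G} (h1 : i.1.1 ≠ v) (h2 : otherV G i = v) :
    extendCol G col v cv f s (Sum.inr i) = s i.1.1 := by
  simp [extendCol, h1, h2]

lemma extendCol_old {i : Inc G} (h1 : i.1.1 ≠ v) (h2 : otherV G i ≠ v) :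
    extendCol G col v cv f s (Sum.inr i) = col (Sum.inr i) := by
  simp [extendCol, h1, h2]

end Extend


section FinsetOpen
open Finset

section LemA

variable {α : Type*} [DecidableEq α]

private lemma triperm₁ (a b c : α) : ({a, b, c} : Finset α) = {b, a, c} := by
  ext x; simp; tauto

private lemma triperm₂ (a b c : α) : ({a, b, c} : Finset α) = {a, c, b} := by
  ext x; simp; tauto

private lemma triperm₃ (a b c : α) : ({a, b, c} : Finset α) = {c, b, a} := by
  ext x; simp; tauto

private lemma tripermrot (a b c : α) : ({a, b, c} : Finset α) = {b, c, a} := by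
  ext x; simp; tauto

/-- If `g` has two elements and `a, b ∉ g` then `g \ {a,b,c}` is nonempty. -/
private lemma pickA {g : Finset α} (hg : g.card = 2) {a b c : α} (ha : a ∉ g) (hb : b ∉ g) :
    (g \ {a, b, c}).Nonempty := by
  obtain ⟨x, y, hxy, rfl⟩ := Finset.card_eq_two.mp hg
  simp only [mem_insert, mem_singleton, not_or] at ha hb
  by_cases hcx : c = x
  · refine ⟨y, ?_⟩
    simp only [mem_sdiff, mem_insert, mem_singleton, not_or]
    exact ⟨by simp, fun h => ha.2 h.symm, fun h => hb.2 h.symm,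
      fun h => hxy (h.trans hcx).symm⟩
  · refine ⟨x, ?_⟩
    simp only [mem_sdiff, mem_insert, mem_singleton, not_or]
    exact ⟨by simp, fun h => ha.1 h.symm, fun h => hb.1 h.symm, fun h => hcx h.symm⟩

private lemma sdiff_pair_nonempty {A : Finset α} (hA : A.card = 3) (a b : α) :
    (A \ {a, b}).Nonempty := by
  have h1 : ({a, b} : Finset α).card ≤ 2 := card_insert_le _ _ |>.trans (by simp)
  have h2 := le_card_sdiff ({a, b} : Finset α) A
  rw [← card_pos]
  omega

/-- Case A of the core lemma: index 1 has a "harmless" element. -/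
private lemma sauxA {A₁ A₂ A₃ g₁ g₂ g₃ : Finset α}
    (hA1 : A₁.card = 3) (hA2 : A₂.card = 3) (hA3 : A₃.card = 3)
    (hg1 : g₁.card = 2) (hg2 : g₂.card = 2) (hg3 : g₃.card = 2)
    (hd1 : Disjoint A₁ g₁) (hd2 : Disjoint A₂ g₂) (hd3 : Disjoint A₃ g₃)
    (hh : (A₁ \ (g₂ ∪ g₃)).Nonempty) :
    ∃ f₁ f₂ f₃, f₁ ∈ A₁ ∧ f₂ ∈ A₂ ∧ f₃ ∈ A₃ ∧ f₁ ≠ f₂ ∧ f₁ ≠ f₃ ∧ f₂ ≠ f₃ ∧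
      (g₁ \ {f₁, f₂, f₃}).Nonempty ∧ (g₂ \ {f₁, f₂, f₃}).Nonempty ∧
      (g₃ \ {f₁, f₂, f₃}).Nonempty := by
  obtain ⟨h, hhmem⟩ := hh
  rw [mem_sdiff, mem_union] at hhmem
  push_neg at hhmem
  obtain ⟨hhA, hhg2, hhg3⟩ := hhmem
  have hhg1 : h ∉ g₁ := fun hx => (disjoint_left.mp hd1 hhA) hx
  by_cases hb : (A₂ \ (g₁ ∪ {h})).Nonempty
  · obtain ⟨f₂, hf₂⟩ := hb
    rw [mem_sdiff, mem_union, mem_singleton] at hf₂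
    push_neg at hf₂
    obtain ⟨hf₂A, hf₂g1, hf₂h⟩ := hf₂
    obtain ⟨f₃, hf₃⟩ := sdiff_pair_nonempty hA3 h f₂
    rw [mem_sdiff, mem_insert, mem_singleton] at hf₃
    push_neg at hf₃
    obtain ⟨hf₃A, hf₃h, hf₃f₂⟩ := hf₃
    have hf₂g2 : f₂ ∉ g₂ := fun hx => (disjoint_left.mp hd2 hf₂A) hx
    have hf₃g3 : f₃ ∉ g₃ := fun hx => (disjoint_left.mp hd3 hf₃A) hx
    refine ⟨h, f₂, f₃, hhA, hf₂A, hf₃A, fun e => hf₂h e.symm, fun e => hf₃h e.symm,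
      fun e => hf₃f₂ e.symm, ?_, ?_, ?_⟩
    · exact pickA hg1 hhg1 hf₂g1
    · exact pickA hg2 hhg2 hf₂g2
    · rw [triperm₂]; exact pickA hg3 hhg3 hf₃g3
  · by_cases hc : (A₃ \ (g₁ ∪ {h})).Nonempty
    · obtain ⟨f₃, hf₃⟩ := hc
      rw [mem_sdiff, mem_union, mem_singleton] at hf₃
      push_neg at hf₃
      obtain ⟨hf₃A, hf₃g1, hf₃h⟩ := hf₃
      obtain ⟨f₂, hf₂⟩ := sdiff_pair_nonempty hA2 h f₃
      rw [mem_sdiff, mem_insert, mem_singleton] at hf₂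
      push_neg at hf₂
      obtain ⟨hf₂A, hf₂h, hf₂f₃⟩ := hf₂
      have hf₂g2 : f₂ ∉ g₂ := fun hx => (disjoint_left.mp hd2 hf₂A) hx
      have hf₃g3 : f₃ ∉ g₃ := fun hx => (disjoint_left.mp hd3 hf₃A) hx
      refine ⟨h, f₂, f₃, hhA, hf₂A, hf₃A, fun e => hf₂h e.symm, fun e => hf₃h e.symm,
        hf₂f₃, ?_, ?_, ?_⟩
      · rw [triperm₂]; exact pickA hg1 hhg1 hf₃g1
      · exact pickA hg2 hhg2 hf₂g2
      · rw [triperm₂]; exact pickA hg3 hhg3 hf₃g3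
    · -- A₂, A₃ ⊆ g₁ ∪ {h}, hence A₂ = A₃ = g₁ ∪ {h}
      rw [not_nonempty_iff_eq_empty, sdiff_eq_empty_iff_subset] at hb hc
      have hcardu : (g₁ ∪ {h}).card ≤ 3 := (card_union_le _ _).trans (by simp [hg1])
      have hA2eq : A₂ = g₁ ∪ {h} := eq_of_subset_of_card_le hb (by omega)
      have hA3eq : A₃ = g₁ ∪ {h} := eq_of_subset_of_card_le hc (by omega)
      obtain ⟨p, q, hpq, hg₁eq⟩ := Finset.card_eq_two.mp hg1
      have hpg1 : p ∈ g₁ := by rw [hg₁eq]; simp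
      have hqg1 : q ∈ g₁ := by rw [hg₁eq]; simp
      have hhp : h ≠ p := fun e => hhg1 (e ▸ hpg1)
      have hhq : h ≠ q := fun e => hhg1 (e ▸ hqg1)
      obtain ⟨f₁, hf₁⟩ := sdiff_pair_nonempty hA1 h p
      rw [mem_sdiff, mem_insert, mem_singleton] at hf₁
      push_neg at hf₁
      obtain ⟨hf₁A, hf₁h, hf₁p⟩ := hf₁
      have hpA2 : p ∈ A₂ := by rw [hA2eq, mem_union]; exact Or.inl hpg1
      have hhA2 : h ∈ A₂ := by rw [hA2eq, mem_union]; simp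
      have hpA3 : p ∈ A₃ := by rw [hA3eq, mem_union]; exact Or.inl hpg1
      have hhA3 : h ∈ A₃ := by rw [hA3eq, mem_union]; simp
      have hpg2 : p ∉ g₂ := fun hx => (disjoint_left.mp hd2 hpA2) hx
      have hhg3' : h ∉ g₃ := hhg3
      have hpg3 : p ∉ g₃ := fun hx => (disjoint_left.mp hd3 hpA3) hx
      have hqA1 : q ∉ A₁ := fun hx => (disjoint_left.mp hd1 hx) hqg1
      refine ⟨f₁, h, p, hf₁A, hhA2, hpA3, hf₁h, hf₁p, hhp, ?_, ?_, ?_⟩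
      · refine ⟨q, ?_⟩
        simp only [mem_sdiff, mem_insert, mem_singleton, not_or]
        exact ⟨hqg1, fun e => hqA1 (e ▸ hf₁A), fun e => hhq e.symm, fun e => hpq e.symm⟩
      · rw [tripermrot]; exact pickA hg2 hhg2 hpg2
      · rw [tripermrot]; exact pickA hg3 hhg3' hpg3

/-- Case B of the core lemma: no index has a harmless element, and `g₂ ⊆ A₁`. -/
private lemma sB {A₁ A₂ A₃ g₁ g₂ g₃ : Finset α}
    (hA1 : A₁.card = 3) (hA2 : A₂.card = 3) (hA3 : A₃.card = 3)
    (hg1 : g₁.card = 2) (hg2 : g₂.card = 2) (hg3 : g₃.card = 2)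
    (hd1 : Disjoint A₁ g₁) (hd2 : Disjoint A₂ g₂) (hd3 : Disjoint A₃ g₃)
    (hB1 : A₁ ⊆ g₂ ∪ g₃) (hB2 : A₂ ⊆ g₁ ∪ g₃) (hB3 : A₃ ⊆ g₁ ∪ g₂)
    (hsub : g₂ ⊆ A₁) :
    ∃ f₁ f₂ f₃, f₁ ∈ A₁ ∧ f₂ ∈ A₂ ∧ f₃ ∈ A₃ ∧ f₁ ≠ f₂ ∧ f₁ ≠ f₃ ∧ f₂ ≠ f₃ ∧
      (g₁ \ {f₁, f₂, f₃}).Nonempty ∧ (g₂ \ {f₁, f₂, f₃}).Nonempty ∧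
      (g₃ \ {f₁, f₂, f₃}).Nonempty := by
  have hr1 : (A₁ \ g₂).card = 1 := by rw [card_sdiff_of_subset hsub]; omega
  obtain ⟨r, hreq⟩ := Finset.card_eq_one.mp hr1
  have hr : r ∈ A₁ ∧ r ∉ g₂ := by
    have : r ∈ A₁ \ g₂ := by rw [hreq]; simp
    rw [mem_sdiff] at this; exact this
  obtain ⟨hrA, hrg2⟩ := hr
  have hrg3 : r ∈ g₃ := by
    have := hB1 hrA
    rw [mem_union] at this
    tauto
  have hrg1 : r ∉ g₁ := fun hx => (disjoint_left.mp hd1 hrA) hx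
  have hf2ne : (A₂ \ g₃).Nonempty := by
    have := le_card_sdiff g₃ A₂
    rw [← card_pos]; omega
  obtain ⟨f₂, hf₂⟩ := hf2ne
  rw [mem_sdiff] at hf₂
  obtain ⟨hf₂A, hf₂g3⟩ := hf₂
  have hf₂g2 : f₂ ∉ g₂ := fun hx => (disjoint_left.mp hd2 hf₂A) hx
  have hf₂g1 : f₂ ∈ g₁ := by
    have := hB2 hf₂A
    rw [mem_union] at this
    tauto
  have hf3ne : (A₃ \ g₁).Nonempty := by
    have := le_card_sdiff g₁ A₃
    rw [← card_pos]; omega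
  obtain ⟨f₃, hf₃⟩ := hf3ne
  rw [mem_sdiff] at hf₃
  obtain ⟨hf₃A, hf₃g1⟩ := hf₃
  have hf₃g3 : f₃ ∉ g₃ := fun hx => (disjoint_left.mp hd3 hf₃A) hx
  have hf₃g2 : f₃ ∈ g₂ := by
    have := hB3 hf₃A
    rw [mem_union] at this
    tauto
  refine ⟨r, f₂, f₃, hrA, hf₂A, hf₃A, fun e => hf₂g3 (e ▸ hrg3), fun e => hrg2 (e ▸ hf₃g2),
    fun e => hf₃g1 (e ▸ hf₂g1), ?_, ?_, ?_⟩
  · rw [triperm₂]; exact pickA hg1 hrg1 hf₃g1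
  · exact pickA hg2 hrg2 hf₂g2
  · rw [tripermrot]; exact pickA hg3 hf₂g3 hf₃g3

/-- The core selection lemma for three full indices. -/
private lemma core3 {A₁ A₂ A₃ g₁ g₂ g₃ : Finset α}
    (hA1 : A₁.card = 3) (hA2 : A₂.card = 3) (hA3 : A₃.card = 3)
    (hg1 : g₁.card = 2) (hg2 : g₂.card = 2) (hg3 : g₃.card = 2)
    (hd1 : Disjoint A₁ g₁) (hd2 : Disjoint A₂ g₂) (hd3 : Disjoint A₃ g₃) :
    ∃ f₁ f₂ f₃, f₁ ∈ A₁ ∧ f₂ ∈ A₂ ∧ f₃ ∈ A₃ ∧ f₁ ≠ f₂ ∧ f₁ ≠ f₃ ∧ f₂ ≠ f₃ ∧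
      (g₁ \ {f₁, f₂, f₃}).Nonempty ∧ (g₂ \ {f₁, f₂, f₃}).Nonempty ∧
      (g₃ \ {f₁, f₂, f₃}).Nonempty := by
  by_cases h1 : (A₁ \ (g₂ ∪ g₃)).Nonempty
  · exact sauxA hA1 hA2 hA3 hg1 hg2 hg3 hd1 hd2 hd3 h1
  by_cases h2 : (A₂ \ (g₁ ∪ g₃)).Nonempty
  · obtain ⟨f₁', f₂', f₃', m1, m2, m3, n12, n13, n23, e1, e2, e3⟩ :=
      sauxA hA2 hA1 hA3 hg2 hg1 hg3 hd2 hd1 hd3 h2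
    refine ⟨f₂', f₁', f₃', m2, m1, m3, fun e => n12 e.symm, n23, n13, ?_, ?_, ?_⟩
    · rw [triperm₁]; exact e2
    · rw [triperm₁]; exact e1
    · rw [triperm₁]; exact e3
  by_cases h3 : (A₃ \ (g₁ ∪ g₂)).Nonempty
  · have h3' : (A₃ \ (g₂ ∪ g₁)).Nonempty := by rwa [union_comm] at h3
    obtain ⟨f₁', f₂', f₃', m1, m2, m3, n12, n13, n23, e1, e2, e3⟩ :=
      sauxA hA3 hA2 hA1 hg3 hg2 hg1 hd3 hd2 hd1 h3'
    refine ⟨f₃', f₂', f₁', m3, m2, m1, fun e => n23 e.symm, fun e => n13 e.symm,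
      fun e => n12 e.symm, ?_, ?_, ?_⟩
    · rw [triperm₃]; exact e3
    · rw [triperm₃]; exact e2
    · rw [triperm₃]; exact e1
  · rw [not_nonempty_iff_eq_empty, sdiff_eq_empty_iff_subset] at h1 h2 h3
    -- pigeonhole : g₂ ⊆ A₁ or g₃ ⊆ A₁
    have hsplit : 2 ≤ (A₁ ∩ g₂).card ∨ 2 ≤ (A₁ ∩ g₃).card := by
      have hu : A₁ = (A₁ ∩ g₂) ∪ (A₁ ∩ g₃) := by
        rw [← inter_union_distrib_left]
        exact (inter_eq_left.mpr h1).symm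
      have hc : A₁.card ≤ (A₁ ∩ g₂).card + (A₁ ∩ g₃).card := by
        calc A₁.card = ((A₁ ∩ g₂) ∪ (A₁ ∩ g₃)).card := by rw [← hu]
        _ ≤ _ := card_union_le _ _
      omega
    rcases hsplit with hs | hs
    · have hg2A : g₂ ⊆ A₁ := by
        have : A₁ ∩ g₂ = g₂ :=
          eq_of_subset_of_card_le inter_subset_right (by omega)
        rw [← this]; exact inter_subset_left
      exact sB hA1 hA2 hA3 hg1 hg2 hg3 hd1 hd2 hd3 h1 h2 h3 hg2A
    · have hg3A : g₃ ⊆ A₁ := by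
        have : A₁ ∩ g₃ = g₃ :=
          eq_of_subset_of_card_le inter_subset_right (by omega)
        rw [← this]; exact inter_subset_left
      have h1' : A₁ ⊆ g₃ ∪ g₂ := by rwa [union_comm] at h1
      obtain ⟨f₁', f₂', f₃', m1, m2, m3, n12, n13, n23, e1, e2, e3⟩ :=
        sB hA1 hA3 hA2 hg1 hg3 hg2 hd1 hd3 hd2 h1' h3 h2 hg3A
      refine ⟨f₁', f₃', f₂', m1, m3, m2, n13, n12, fun e => n23 e.symm, ?_, ?_, ?_⟩
      · rw [triperm₂]; exact e1
      · rw [triperm₂]; exact e3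
      · rw [triperm₂]; exact e2


private lemma pickB {g : Finset α} (hg : g.card = 2) {a b : α} (ha : a ∉ g) :
    (g \ {a, b}).Nonempty := by
  obtain ⟨x, y, hxy, rfl⟩ := Finset.card_eq_two.mp hg
  simp only [mem_insert, mem_singleton, not_or] at ha
  by_cases hbx : b = x
  · refine ⟨y, ?_⟩
    simp only [mem_sdiff, mem_insert, mem_singleton, not_or]
    exact ⟨by simp, fun h => ha.2 h.symm, fun h => hxy (h.trans hbx).symm⟩
  · refine ⟨x, ?_⟩
    simp only [mem_sdiff, mem_insert, mem_singleton, not_or]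
    exact ⟨by simp, fun h => ha.1 h.symm, fun h => hbx h.symm⟩

/-- The family form of the selection lemma. -/
private lemma lemA_family {V : Type*} [DecidableEq V] (T : Finset V)
    (hT : T.card ≤ 3) (avail A : V → Finset α) (d : α)
    (h5 : ∀ u ∈ T, 5 ≤ (avail u).card)
    (hA3 : ∀ u ∈ T, (A u).card ≤ 3)
    (hAsub : ∀ u ∈ T, A u ⊆ avail u) :
    ∃ f s : V → α,
      (∀ u ∈ T, f u ∈ avail u ∧ (A u ∪ {f u}).card ≤ 3 ∧
        s u ∈ avail u ∧ s u ∉ A u ∧ ∀ w ∈ T, s u ≠ f w) ∧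
      (∀ u ∈ T, ∀ w ∈ T, u ≠ w → f u ≠ f w) := by
  -- pad each A u to a 3-set A' u inside avail u and choose a 2-set g u ⊆ avail u \ A' u
  have hpad : ∀ u, ∃ A' gg : Finset α, u ∈ T →
      A u ⊆ A' ∧ A' ⊆ avail u ∧ A'.card = 3 ∧ gg ⊆ avail u \ A' ∧ gg.card = 2 := by
    intro u
    by_cases hu : u ∈ T
    · obtain ⟨A', hsub1, hsub2, hcard⟩ :=
        exists_subsuperset_card_eq (hAsub u hu) (hA3 u hu) (by have := h5 u hu; omega)
      have hgc : 2 ≤ (avail u \ A').card := by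
        rw [card_sdiff_of_subset hsub2]
        have := h5 u hu
        omega
      obtain ⟨gg, hgsub, hgcard⟩ := exists_subset_card_eq hgc
      exact ⟨A', gg, fun _ => ⟨hsub1, hsub2, hcard, hgsub, hgcard⟩⟩
    · exact ⟨∅, ∅, fun h => absurd h hu⟩
  choose A' gg hAg using hpad
  -- basic consequences
  have hA'av : ∀ u ∈ T, A' u ⊆ avail u := fun u hu => (hAg u hu).2.1
  have hA'card : ∀ u ∈ T, (A' u).card = 3 := fun u hu => (hAg u hu).2.2.1
  have hAA' : ∀ u ∈ T, A u ⊆ A' u := fun u hu => (hAg u hu).1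
  have hgav : ∀ u ∈ T, gg u ⊆ avail u \ A' u := fun u hu => (hAg u hu).2.2.2.1
  have hgcard : ∀ u ∈ T, (gg u).card = 2 := fun u hu => (hAg u hu).2.2.2.2
  have hdisj : ∀ u ∈ T, Disjoint (A' u) (gg u) := by
    intro u hu
    rw [disjoint_right]
    intro x hx
    exact (mem_sdiff.mp (hgav u hu hx)).2
  -- uniform per-element consequence builder
  have hmkf : ∀ u ∈ T, ∀ x, x ∈ A' u → x ∈ avail u ∧ (A u ∪ {x}).card ≤ 3 := by
    intro u hu x hx
    refine ⟨hA'av u hu hx, ?_⟩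
    have hsub : A u ∪ {x} ⊆ A' u := by
      intro z hz
      rcases mem_union.mp hz with hz | hz
      · exact hAA' u hu hz
      · rw [mem_singleton.mp hz]; exact hx
    calc (A u ∪ {x}).card ≤ (A' u).card := card_le_card hsub
    _ = 3 := hA'card u hu
  have hmks : ∀ u ∈ T, ∀ x, x ∈ gg u → x ∈ avail u ∧ x ∉ A u := by
    intro u hu x hx
    have := mem_sdiff.mp (hgav u hu hx)
    exact ⟨this.1, fun hc => this.2 (hAA' u hu hc)⟩
  obtain h0 | h1 | h2 | h3 : T.card = 0 ∨ T.card = 1 ∨ T.card = 2 ∨ T.card = 3 := by omega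
  · rw [Finset.card_eq_zero] at h0
    exact ⟨fun _ => d, fun _ => d, fun u hu => absurd hu (h0 ▸ notMem_empty u),
      fun u hu => absurd hu (h0 ▸ notMem_empty u)⟩
  · obtain ⟨u₁, rfl⟩ := Finset.card_eq_one.mp h1
    have hu₁ : u₁ ∈ ({u₁} : Finset V) := mem_singleton_self u₁
    obtain ⟨f₁, hf₁⟩ : (A' u₁).Nonempty := by rw [← card_pos, hA'card u₁ hu₁]; omega
    obtain ⟨s₁, hs₁⟩ : (gg u₁ \ {f₁, f₁}).Nonempty :=
      pickB (hgcard u₁ hu₁) (disjoint_left.mp (hdisj u₁ hu₁) hf₁)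
    rw [mem_sdiff] at hs₁
    refine ⟨fun _ => f₁, fun _ => s₁, ?_, ?_⟩
    · intro u hu
      rw [mem_singleton.mp hu]
      obtain ⟨hav, hcard⟩ := hmkf u₁ hu₁ f₁ hf₁
      obtain ⟨hav', hnA⟩ := hmks u₁ hu₁ s₁ hs₁.1
      refine ⟨hav, hcard, hav', hnA, ?_⟩
      intro w _
      intro hc
      exact hs₁.2 (by rw [show s₁ = f₁ from hc]; simp)
    · intro u hu w hw hne
      rw [mem_singleton.mp hu, mem_singleton.mp hw] at hne
      exact absurd rfl hne
  · obtain ⟨u₁, u₂, hne12, rfl⟩ := Finset.card_eq_two.mp h2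
    have hu₁ : u₁ ∈ ({u₁, u₂} : Finset V) := by simp
    have hu₂ : u₂ ∈ ({u₁, u₂} : Finset V) := by simp
    obtain ⟨f₁, hf₁⟩ : (A' u₁).Nonempty := by rw [← card_pos, hA'card u₁ hu₁]; omega
    obtain ⟨f₂, hf₂⟩ : (A' u₂ \ {f₁}).Nonempty := by
      rw [← card_pos]
      have := le_card_sdiff ({f₁} : Finset α) (A' u₂)
      have := hA'card u₂ hu₂
      simp only [card_singleton] at *
      omega
    rw [mem_sdiff, mem_singleton] at hf₂
    obtain ⟨hf₂A, hf₂f₁⟩ := hf₂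
    obtain ⟨s₁, hs₁⟩ : (gg u₁ \ {f₁, f₂}).Nonempty :=
      pickB (hgcard u₁ hu₁) (disjoint_left.mp (hdisj u₁ hu₁) hf₁)
    obtain ⟨s₂, hs₂⟩ : (gg u₂ \ {f₂, f₁}).Nonempty :=
      pickB (hgcard u₂ hu₂) (disjoint_left.mp (hdisj u₂ hu₂) hf₂A)
    rw [mem_sdiff, mem_insert, mem_singleton] at hs₁ hs₂
    push_neg at hs₁ hs₂
    classical
    set F : V → α := fun x => if x = u₁ then f₁ else f₂ with hFdef
    set Sf : V → α := fun x => if x = u₁ then s₁ else s₂ with hSdef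
    have hF1 : F u₁ = f₁ := by simp [hFdef]
    have hF2 : F u₂ = f₂ := by simp [hFdef, Ne.symm hne12]
    have hS1 : Sf u₁ = s₁ := by simp [hSdef]
    have hS2 : Sf u₂ = s₂ := by simp [hSdef, Ne.symm hne12]
    have hFval : ∀ w : V, F w = f₁ ∨ F w = f₂ := by
      intro w
      by_cases hw : w = u₁
      · left; simp [hFdef, hw]
      · right; simp [hFdef, hw]
    refine ⟨F, Sf, ?_, ?_⟩
    · intro u hu
      have huv : u = u₁ ∨ u = u₂ := by simpa using hu
      rcases huv with rfl | rfl
      · rw [hF1, hS1]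
        obtain ⟨hav, hcard⟩ := hmkf u hu₁ f₁ hf₁
        obtain ⟨hav', hnA⟩ := hmks u hu₁ s₁ hs₁.1
        refine ⟨hav, hcard, hav', hnA, ?_⟩
        intro w hw
        rcases hFval w with h | h <;> rw [h]
        · exact hs₁.2.1
        · exact hs₁.2.2
      · rw [hF2, hS2]
        obtain ⟨hav, hcard⟩ := hmkf u hu₂ f₂ hf₂A
        obtain ⟨hav', hnA⟩ := hmks u hu₂ s₂ hs₂.1
        refine ⟨hav, hcard, hav', hnA, ?_⟩
        intro w hw
        rcases hFval w with h | h <;> rw [h]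
        · exact hs₂.2.2
        · exact hs₂.2.1
    · intro u hu w hw hne
      have huv : u = u₁ ∨ u = u₂ := by simpa using hu
      have hwv : w = u₁ ∨ w = u₂ := by simpa using hw
      rcases huv with rfl | rfl <;> rcases hwv with rfl | rfl
      · exact absurd rfl hne
      · rw [hF1, hF2]; exact fun e => hf₂f₁ e.symm
      · rw [hF2, hF1]; exact hf₂f₁
      · exact absurd rfl hne
  · obtain ⟨u₁, u₂, u₃, h12, h13, h23, rfl⟩ := Finset.card_eq_three.mp h3
    have hu₁ : u₁ ∈ ({u₁, u₂, u₃} : Finset V) := by simp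
    have hu₂ : u₂ ∈ ({u₁, u₂, u₃} : Finset V) := by simp
    have hu₃ : u₃ ∈ ({u₁, u₂, u₃} : Finset V) := by simp
    obtain ⟨f₁, f₂, f₃, hf₁, hf₂, hf₃, hn12, hn13, hn23, he₁, he₂, he₃⟩ :=
      core3 (hA'card u₁ hu₁) (hA'card u₂ hu₂) (hA'card u₃ hu₃)
        (hgcard u₁ hu₁) (hgcard u₂ hu₂) (hgcard u₃ hu₃)
        (hdisj u₁ hu₁) (hdisj u₂ hu₂) (hdisj u₃ hu₃)
    obtain ⟨s₁, hs₁⟩ := he₁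
    obtain ⟨s₂, hs₂⟩ := he₂
    obtain ⟨s₃, hs₃⟩ := he₃
    rw [mem_sdiff, mem_insert, mem_insert, mem_singleton] at hs₁ hs₂ hs₃
    push_neg at hs₁ hs₂ hs₃
    classical
    set F : V → α := fun x => if x = u₁ then f₁ else if x = u₂ then f₂ else f₃ with hF
    set Sf : V → α := fun x => if x = u₁ then s₁ else if x = u₂ then s₂ else s₃ with hSf
    have hFval : ∀ w : V, F w = f₁ ∨ F w = f₂ ∨ F w = f₃ := by
      intro w
      by_cases h1' : w = u₁
      · left; simp [hF, h1']
      · by_cases h2' : w = u₂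
        · right; left; simp [hF, h2', Ne.symm h12]
        · right; right; simp [hF, h1', h2']
    have hF1 : F u₁ = f₁ := by simp [hF]
    have hF2 : F u₂ = f₂ := by simp [hF, h12.symm]
    have hF3 : F u₃ = f₃ := by simp [hF, h13.symm, h23.symm]
    have hS1 : Sf u₁ = s₁ := by simp [hSf]
    have hS2 : Sf u₂ = s₂ := by simp [hSf, h12.symm]
    have hS3 : Sf u₃ = s₃ := by simp [hSf, h13.symm, h23.symm]
    refine ⟨F, Sf, ?_, ?_⟩
    · intro u hu
      rcases mem_insert.mp hu with rfl | hu'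
      · rw [hF1, hS1]
        obtain ⟨hav, hcard⟩ := hmkf u hu₁ f₁ hf₁
        obtain ⟨hav', hnA⟩ := hmks u hu₁ s₁ hs₁.1
        refine ⟨hav, hcard, hav', hnA, ?_⟩
        intro w hw
        rcases hFval w with h | h | h <;> rw [h]
        · exact hs₁.2.1
        · exact hs₁.2.2.1
        · exact hs₁.2.2.2
      rcases mem_insert.mp hu' with rfl | hu''
      · rw [hF2, hS2]
        obtain ⟨hav, hcard⟩ := hmkf u hu₂ f₂ hf₂
        obtain ⟨hav', hnA⟩ := hmks u hu₂ s₂ hs₂.1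
        refine ⟨hav, hcard, hav', hnA, ?_⟩
        intro w hw
        rcases hFval w with h | h | h <;> rw [h]
        · exact hs₂.2.1
        · exact hs₂.2.2.1
        · exact hs₂.2.2.2
      · rw [mem_singleton.mp hu'']
        rw [hF3, hS3]
        obtain ⟨hav, hcard⟩ := hmkf u₃ hu₃ f₃ hf₃
        obtain ⟨hav', hnA⟩ := hmks u₃ hu₃ s₃ hs₃.1
        refine ⟨hav, hcard, hav', hnA, ?_⟩
        intro w hw
        rcases hFval w with h | h | h <;> rw [h]
        · exact hs₃.2.1
        · exact hs₃.2.2.1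
        · exact hs₃.2.2.2
    · intro u hu w hw hne
      have huv : u = u₁ ∨ u = u₂ ∨ u = u₃ := by simpa using hu
      have hwv : w = u₁ ∨ w = u₂ ∨ w = u₃ := by simpa using hw
      rcases huv with rfl | rfl | rfl <;> rcases hwv with rfl | rfl | rfl <;>
        first
        | exact absurd rfl hne
        | (rw [hF1, hF2]; exact hn12)
        | (rw [hF1, hF3]; exact hn13)
        | (rw [hF2, hF1]; exact hn12.symm)
        | (rw [hF2, hF3]; exact hn23)
        | (rw [hF3, hF1]; exact hn13.symm)
        | (rw [hF3, hF2]; exact hn23.symm)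

end LemA
end FinsetOpen

section MainInduction

set_option linter.unusedSectionVars false

variable {V : Type*} [Fintype V] [DecidableEq V]

lemma deg_le_maxDeg (G : SimpleGraph V) [DecidableRel G.Adj] (u : V) :
    (G.neighborFinset u).card ≤ maxDeg G := by
  have h : (G.neighborFinset u).card = (G.neighborSet u).ncard := by
    rw [SimpleGraph.neighborFinset_def, ← Set.ncard_eq_toFinset_card']
  rw [h]
  exact Finset.le_sup (f := fun v => (G.neighborSet v).ncard) (Finset.mem_univ u)

lemma exists_good_all (G : SimpleGraph V) [DecidableRel G.Adj]
    (hdeg : Degenerate 3 G) (hΔ : 5 ≤ maxDeg G) :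
    ∀ S : Finset V, ∃ c : VIElem G → Fin (maxDeg G + 5), Good G c S := by
  have hN10 : 10 ≤ maxDeg G + 5 := by omega
  suffices H : ∀ n (S : Finset V), S.card ≤ n →
      ∃ c : VIElem G → Fin (maxDeg G + 5), Good G c S by
    intro S; exact H S.card S le_rfl
  intro n
  induction n with
  | zero =>
    intro S hS
    have hS0 : S = ∅ := Finset.card_eq_zero.mp (Nat.le_zero.mp hS)
    subst hS0
    refine ⟨fun _ => ⟨0, by omega⟩, ?_, ?_⟩
    · intro a b _ hina _
      exfalso
      cases a with
      | inl u => exact absurd hina (Finset.notMem_empty u)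
      | inr i => exact absurd hina.1 (Finset.notMem_empty _)
    · intro u hu
      exact absurd hu (Finset.notMem_empty u)
  | succ n ih =>
    intro S hS
    by_cases hcard : S.card ≤ n
    · exact ih S hcard
    have hSne : S.Nonempty := by
      rw [← Finset.card_pos]; omega
    obtain ⟨v, hvS, hvdeg⟩ := hdeg (↑S) (Finset.coe_nonempty.mpr hSne)
    rw [Finset.mem_coe] at hvS
    set S' := S.erase v with hS'def
    set T := nbrsIn G S' v with hTdef
    have hTcard : T.card ≤ 3 := by
      have h1 : G.neighborSet v ∩ ↑S = ↑(nbrsIn G S v) := by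
        rw [nbrsIn, Finset.coe_inter, SimpleGraph.neighborFinset_def, Set.coe_toFinset]
      rw [h1, Set.ncard_coe_finset] at hvdeg
      refine le_trans (Finset.card_le_card ?_) hvdeg
      exact Finset.inter_subset_inter (le_refl _) (Finset.erase_subset v S)
    have hS'card : S'.card ≤ n := by
      rw [hS'def, Finset.card_erase_of_mem hvS]; omega
    obtain ⟨col, hG1, hG2⟩ := ih S' hS'card
    -- facts about members of T
    have hTfact : ∀ u ∈ T, G.Adj v u ∧ u ∈ S' ∧ u ≠ v ∧ u ∈ S := by
      intro u hu
      rw [hTdef, nbrsIn, Finset.mem_inter, SimpleGraph.mem_neighborFinset] at hu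
      obtain ⟨hadj, hS'⟩ := hu
      exact ⟨hadj, hS', (Finset.mem_erase.mp hS').1, (Finset.mem_erase.mp hS').2⟩
    have hTmem : ∀ u, G.Adj v u → u ∈ S → u ∈ T := by
      intro u hadj huS
      rw [hTdef, nbrsIn, Finset.mem_inter, SimpleGraph.mem_neighborFinset]
      exact ⟨hadj, Finset.mem_erase.mpr ⟨hadj.ne', huS⟩⟩
    set avail : V → Finset (Fin (maxDeg G + 5)) :=
      fun u => Finset.univ \ (Bset G col S' u ∪ {col (Sum.inl u)}) with havail
    have h5 : ∀ u ∈ T, 5 ≤ (avail u).card := by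
      intro u hu
      obtain ⟨hadj, huS', hune, huS⟩ := hTfact u hu
      have hBsub : nbrsIn G S' u ⊆ (G.neighborFinset u).erase v := by
        intro x hx
        rw [nbrsIn, Finset.mem_inter] at hx
        rw [Finset.mem_erase]
        exact ⟨(Finset.mem_erase.mp hx.2).1, hx.1⟩
      have hvmem : v ∈ G.neighborFinset u := by
        rw [SimpleGraph.mem_neighborFinset]; exact hadj.symm
      have hdege : ((G.neighborFinset u).erase v).card = (G.neighborFinset u).card - 1 :=
        Finset.card_erase_of_mem hvmem
      have hdeg1 : 1 ≤ (G.neighborFinset u).card := Finset.card_pos.mpr ⟨v, hvmem⟩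
      have hdegu := deg_le_maxDeg G u
      have hBcard : (Bset G col S' u).card ≤ maxDeg G - 1 := by
        calc (Bset G col S' u).card ≤ (nbrsIn G S' u).card := Finset.card_image_le
        _ ≤ ((G.neighborFinset u).erase v).card := Finset.card_le_card hBsub
        _ ≤ maxDeg G - 1 := by omega
      have hXcard : (Bset G col S' u ∪ {col (Sum.inl u)}).card ≤ maxDeg G := by
        calc (Bset G col S' u ∪ {col (Sum.inl u)}).card
            ≤ (Bset G col S' u).card + 1 := by
              refine le_trans (Finset.card_union_le _ _) ?_
              simp
        _ ≤ maxDeg G := by omega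
      have hsd := Finset.card_sdiff_of_subset
        (Finset.subset_univ (Bset G col S' u ∪ {col (Sum.inl u)}))
      rw [havail]
      rw [hsd, Finset.card_univ, Fintype.card_fin]
      omega
    have hA3 : ∀ u ∈ T, (Aset G col S' u).card ≤ 3 :=
      fun u hu => hG2 u (hTfact u hu).2.1
    have hAsub : ∀ u ∈ T, Aset G col S' u ⊆ avail u := by
      intro u hu x hx
      obtain ⟨hadj, huS', hune, huS⟩ := hTfact u hu
      obtain ⟨w, hw, hxval⟩ := Finset.mem_image.mp hx
      rw [nbrsIn, Finset.mem_inter, SimpleGraph.mem_neighborFinset] at hw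
      obtain ⟨hadjuw, hwS'⟩ := hw
      have hadjwu : G.Adj w u := hadjuw.symm
      set i : Inc G := vinc G hadjwu with hidef
      have hi1 : i.1.1 = w := rfl
      have hio : otherV G i = u := other_vinc G hadjwu
      have hxcol : x = col (Sum.inr i) := by
        rw [← hxval, colInc_eval G col hadjwu]
      rw [havail, Finset.mem_sdiff]
      refine ⟨Finset.mem_univ x, ?_⟩
      rw [Finset.mem_union, Finset.mem_singleton]
      rintro (hB | hc)
      · obtain ⟨w', hw', hyval⟩ := Finset.mem_image.mp hB
        rw [nbrsIn, Finset.mem_inter, SimpleGraph.mem_neighborFinset] at hw'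
        obtain ⟨hadjuw', hw'S'⟩ := hw'
        set j : Inc G := vinc G hadjuw' with hjdef
        have hyval' : x = col (Sum.inr j) := by
          rw [← hyval, colInc_eval G col hadjuw']
        have hne : i ≠ j := by
          intro he
          have : i.1.1 = j.1.1 := by rw [he]
          rw [hi1] at this
          exact hadjuw.ne this.symm
        have hVI : VIAdj G (Sum.inr i) (Sum.inr j) := by
          refine ⟨hne, Or.inr (Or.inr (Or.inl ?_))⟩
          show s(i.1.1, j.1.1) = i.1.2
          rfl
        have := hG1 _ _ hVI ⟨hwS', hio ▸ huS'⟩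
          ⟨huS', (other_vinc G hadjuw').symm ▸ hw'S'⟩
        rw [← hxcol, ← hyval'] at this
        exact this rfl
      · have hVI : VIAdj G (Sum.inr i) (Sum.inl u) := by
          show u ∈ i.1.2
          exact Sym2.mem_mk_right w u
        have := hG1 _ _ hVI ⟨hwS', hio ▸ huS'⟩ huS'
        rw [← hxcol] at this
        exact this (hc ▸ rfl)
    -- selection of new colors via the combinatorial lemma
    obtain ⟨f, s, hfs, hinj⟩ := lemA_family T hTcard avail (fun u => Aset G col S' u)
      ⟨0, by omega⟩ h5 hA3 hAsub
    have hfav : ∀ u ∈ T, f u ∉ Bset G col S' u ∧ f u ≠ col (Sum.inl u) := by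
      intro u hu
      have h := (hfs u hu).1
      rw [havail, Finset.mem_sdiff, Finset.mem_union, Finset.mem_singleton] at h
      push_neg at h
      exact h.2
    have hsav : ∀ u ∈ T, s u ∉ Bset G col S' u ∧ s u ≠ col (Sum.inl u) := by
      intro u hu
      have h := (hfs u hu).2.2.1
      rw [havail, Finset.mem_sdiff, Finset.mem_union, Finset.mem_singleton] at h
      push_neg at h
      exact h.2
    have hfA : ∀ u ∈ T, (Aset G col S' u ∪ {f u}).card ≤ 3 := fun u hu => (hfs u hu).2.1
    have hsA : ∀ u ∈ T, s u ∉ Aset G col S' u := fun u hu => (hfs u hu).2.2.2.1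
    have hsf : ∀ u ∈ T, ∀ w ∈ T, s u ≠ f w := fun u hu => (hfs u hu).2.2.2.2
    -- choose the color of the new vertex
    have hcvex : (Finset.univ \
        (((T.image fun u => col (Sum.inl u)) ∪ T.image f) ∪ T.image s)).Nonempty := by
      rw [← Finset.card_pos]
      have i1 : (T.image fun u => col (Sum.inl u)).card ≤ 3 :=
        le_trans Finset.card_image_le hTcard
      have i2 : (T.image f).card ≤ 3 := le_trans Finset.card_image_le hTcard
      have i3 : (T.image s).card ≤ 3 := le_trans Finset.card_image_le hTcard
      have hXc : (((T.image fun u => col (Sum.inl u)) ∪ T.image f) ∪ T.image s).card ≤ 9 := by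
        have := Finset.card_union_le ((T.image fun u => col (Sum.inl u)) ∪ T.image f)
          (T.image s)
        have := Finset.card_union_le (T.image fun u => col (Sum.inl u)) (T.image f)
        omega
      rw [Finset.card_sdiff_of_subset (Finset.subset_univ _), Finset.card_univ, Fintype.card_fin]
      omega
    obtain ⟨cv, hcvmem⟩ := hcvex
    rw [Finset.mem_sdiff] at hcvmem
    have hcvc : ∀ u ∈ T, cv ≠ col (Sum.inl u) := by
      intro u hu he
      exact hcvmem.2 (Finset.mem_union.mpr (Or.inl (Finset.mem_union.mpr (Or.inl
        (Finset.mem_image.mpr ⟨u, hu, he.symm⟩)))))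
    have hcvf : ∀ u ∈ T, cv ≠ f u := by
      intro u hu he
      exact hcvmem.2 (Finset.mem_union.mpr (Or.inl (Finset.mem_union.mpr (Or.inr
        (Finset.mem_image.mpr ⟨u, hu, he.symm⟩)))))
    have hcvs : ∀ u ∈ T, cv ≠ s u := by
      intro u hu he
      exact hcvmem.2 (Finset.mem_union.mpr (Or.inr (Finset.mem_image.mpr ⟨u, hu, he.symm⟩)))
    -- the extended coloring
    set col2 := extendCol G col v cv f s with hcol2
    -- classification helpers
    have hfT : ∀ i : Inc G, i.1.1 = v → InS G S (Sum.inr i) → otherV G i ∈ T := by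
      intro i h1 hins
      have hadj := other_adj G i
      rw [h1] at hadj
      exact hTmem (otherV G i) hadj hins.2
    have hsT : ∀ i : Inc G, otherV G i = v → InS G S (Sum.inr i) → i.1.1 ∈ T := by
      intro i h2 hins
      have hadj := (other_adj G i).symm
      rw [h2] at hadj
      exact hTmem i.1.1 hadj hins.1
    have holdS' : ∀ i : Inc G, i.1.1 ≠ v → otherV G i ≠ v → InS G S (Sum.inr i) →
        InS G S' (Sum.inr i) := by
      intro i h1 h2 hins
      exact ⟨Finset.mem_erase.mpr ⟨h1, hins.1⟩, Finset.mem_erase.mpr ⟨h2, hins.2⟩⟩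
    have hclass : ∀ i : Inc G,
        (i.1.1 = v) ∨ (i.1.1 ≠ v ∧ otherV G i = v) ∨ (i.1.1 ≠ v ∧ otherV G i ≠ v) := by
      intro i
      by_cases h1 : i.1.1 = v
      · exact Or.inl h1
      · by_cases h2 : otherV G i = v
        · exact Or.inr (Or.inl ⟨h1, h2⟩)
        · exact Or.inr (Or.inr ⟨h1, h2⟩)
    have hadjsymm : ∀ i j : Inc G, VIAdj G (Sum.inr i) (Sum.inr j) →
        VIAdj G (Sum.inr j) (Sum.inr i) := by
      rintro i j ⟨hne, hd⟩
      refine ⟨Ne.symm hne, ?_⟩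
      rcases hd with h | h | h | h
      · exact Or.inl h.symm
      · exact Or.inr (Or.inl h.symm)
      · exact Or.inr (Or.inr (Or.inr (by rw [Sym2.eq_swap]; exact h)))
      · exact Or.inr (Or.inr (Or.inl (by rw [Sym2.eq_swap]; exact h)))
    -- f-type vs old incidence
    have h_f_old : ∀ i j : Inc G, i.1.1 = v → j.1.1 ≠ v → otherV G j ≠ v →
        InS G S (Sum.inr i) → InS G S (Sum.inr j) →
        VIAdj G (Sum.inr i) (Sum.inr j) → col2 (Sum.inr i) ≠ col2 (Sum.inr j) := by
      rintro i j hi1 hj1 hj2 hinsi hinsj ⟨hne, hd⟩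
      have hwT := hfT i hi1 hinsi
      rw [hcol2, extendCol_f G col v cv f s hi1, extendCol_old G col v cv f s hj1 hj2]
      have hj11 : j.1.1 = otherV G i := by
        rcases hd with h | h | h | h
        · exact absurd (h.symm.trans hi1) hj1
        · exfalso
          rw [other_edge G i, other_edge G j, Sym2.eq_iff] at h
          rcases h with ⟨ha, hb⟩ | ⟨ha, hb⟩
          · exact hj1 (ha.symm.trans hi1)
          · exact hj2 (ha.symm.trans hi1)
        · rw [other_edge G i, Sym2.eq_iff] at h
          rcases h with ⟨_, hb⟩ | ⟨ha, hb⟩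
          · exact hb
          · exact absurd (hb.trans hi1) hj1
        · exfalso
          rw [other_edge G j, Sym2.eq_iff] at h
          rcases h with ⟨ha, _⟩ | ⟨ha, hb⟩
          · exact hj1 (ha.symm.trans hi1)
          · exact hj2 (ha.symm.trans hi1)
      have hBmem : col (Sum.inr j) ∈ Bset G col S' (otherV G i) :=
        mem_Bset_of G col S' (otherV G i) j hj11
          (Finset.mem_erase.mpr ⟨hj2, hinsj.2⟩)
      intro he
      exact (hfav (otherV G i) hwT).1 (he ▸ hBmem)
    -- s-type vs old incidence
    have h_s_old : ∀ i j : Inc G, i.1.1 ≠ v → otherV G i = v → j.1.1 ≠ v → otherV G j ≠ v →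
        InS G S (Sum.inr i) → InS G S (Sum.inr j) →
        VIAdj G (Sum.inr i) (Sum.inr j) → col2 (Sum.inr i) ≠ col2 (Sum.inr j) := by
      rintro i j hi1 hi2 hj1 hj2 hinsi hinsj ⟨hne, hd⟩
      have hwT := hsT i hi2 hinsi
      rw [hcol2, extendCol_s G col v cv f s hi1 hi2, extendCol_old G col v cv f s hj1 hj2]
      have hjS' : j.1.1 ∈ S' := Finset.mem_erase.mpr ⟨hj1, hinsj.1⟩
      have hjoS' : otherV G j ∈ S' := Finset.mem_erase.mpr ⟨hj2, hinsj.2⟩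
      rcases hd with h | h | h | h
      · have hB := mem_Bset_of G col S' i.1.1 j h.symm hjoS'
        intro he
        exact (hsav i.1.1 hwT).1 (he ▸ hB)
      · exfalso
        rw [other_edge G i, other_edge G j, Sym2.eq_iff] at h
        rcases h with ⟨ha, hb⟩ | ⟨ha, hb⟩
        · exact hj2 (hb.symm.trans hi2)
        · exact hj1 (hb.symm.trans hi2)
      · exfalso
        rw [other_edge G i, hi2, Sym2.eq_iff] at h
        rcases h with ⟨_, hb⟩ | ⟨ha, hb⟩
        · exact hj1 hb
        · exact hi1 ha
      · rw [other_edge G j, Sym2.eq_iff] at h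
        rcases h with ⟨ha, hb⟩ | ⟨ha, hb⟩
        · exact absurd hb.symm (other_ne G j)
        · have hA := mem_Aset_of G col S' i.1.1 j ha.symm hjS'
          intro he
          exact (hsA i.1.1 hwT) (he ▸ hA)
    -- s-type vs s-type : not adjacent
    have h_s_s : ∀ i j : Inc G, i.1.1 ≠ v → otherV G i = v → j.1.1 ≠ v → otherV G j = v →
        VIAdj G (Sum.inr i) (Sum.inr j) → False := by
      rintro i j hi1 hi2 hj1 hj2 ⟨hne, hd⟩
      rcases hd with h | h | h | h
      · exact hne (inc_ext G i j h (hi2.trans hj2.symm))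
      · rw [other_edge G i, other_edge G j, Sym2.eq_iff] at h
        rcases h with ⟨ha, hb⟩ | ⟨ha, hb⟩
        · exact hne (inc_ext G i j ha (hi2.trans hj2.symm))
        · exact hj1 (hb.symm.trans hi2)
      · rw [other_edge G i, hi2, Sym2.eq_iff] at h
        rcases h with ⟨_, hb⟩ | ⟨ha, hb⟩
        · exact hj1 hb
        · exact hi1 ha
      · rw [other_edge G j, hj2, Sym2.eq_iff] at h
        rcases h with ⟨ha, hb⟩ | ⟨ha, hb⟩
        · exact hj1 hb
        · exact hi1 ha
    -- vertex vs incidence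
    have hkey_vi : ∀ (u : V) (i : Inc G), u ∈ i.1.2 → InS G S (Sum.inl u) →
        InS G S (Sum.inr i) → col2 (Sum.inl u) ≠ col2 (Sum.inr i) := by
      intro u i hmem hinsu hinsi
      have hmem' : u = i.1.1 ∨ u = otherV G i := (mem_edge_iff G i u).mp hmem
      rcases hclass i with hi1 | ⟨hi1, hi2⟩ | ⟨hi1, hi2⟩
      · have hwT := hfT i hi1 hinsi
        rw [hcol2, extendCol_f G col v cv f s hi1]
        rcases hmem' with he | he
        · rw [he, hi1, extendCol_inl_v]
          exact hcvf (otherV G i) hwT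
        · have hune : otherV G i ≠ v := (hTfact _ hwT).2.2.1
          rw [he, extendCol_inl G col v cv f s hune]
          exact fun hh => (hfav _ hwT).2 hh.symm
      · have hwT := hsT i hi2 hinsi
        rw [hcol2, extendCol_s G col v cv f s hi1 hi2]
        rcases hmem' with he | he
        · rw [he, extendCol_inl G col v cv f s hi1]
          exact fun hh => (hsav _ hwT).2 hh.symm
        · rw [he, hi2, extendCol_inl_v]
          exact hcvs i.1.1 hwT
      · have huv : u ≠ v := by
          rcases hmem' with he | he
          · exact he ▸ hi1
          · exact he ▸ hi2
        rw [hcol2, extendCol_inl G col v cv f s huv, extendCol_old G col v cv f s hi1 hi2]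
        exact hG1 (Sum.inl u) (Sum.inr i) hmem (Finset.mem_erase.mpr ⟨huv, hinsu⟩)
          (holdS' i hi1 hi2 hinsi)
    -- incidence vs incidence
    have hkey_ii : ∀ i j : Inc G, VIAdj G (Sum.inr i) (Sum.inr j) → InS G S (Sum.inr i) →
        InS G S (Sum.inr j) → col2 (Sum.inr i) ≠ col2 (Sum.inr j) := by
      intro i j hadj hinsi hinsj
      rcases hclass i with hi1 | ⟨hi1, hi2⟩ | ⟨hi1, hi2⟩ <;>
        rcases hclass j with hj1 | ⟨hj1, hj2⟩ | ⟨hj1, hj2⟩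
      · -- f f
        have hiT := hfT i hi1 hinsi
        have hjT := hfT j hj1 hinsj
        rw [hcol2, extendCol_f G col v cv f s hi1, extendCol_f G col v cv f s hj1]
        have hwne : otherV G i ≠ otherV G j := by
          intro he
          exact hadj.1 (inc_ext G i j (hi1.trans hj1.symm) he)
        exact hinj _ hiT _ hjT hwne
      · -- f s
        rw [hcol2, extendCol_f G col v cv f s hi1, extendCol_s G col v cv f s hj1 hj2]
        exact fun he => (hsf j.1.1 (hsT j hj2 hinsj) (otherV G i) (hfT i hi1 hinsi)) he.symm
      · -- f old
        exact h_f_old i j hi1 hj1 hj2 hinsi hinsj hadj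
      · -- s f
        rw [hcol2, extendCol_s G col v cv f s hi1 hi2, extendCol_f G col v cv f s hj1]
        exact hsf i.1.1 (hsT i hi2 hinsi) (otherV G j) (hfT j hj1 hinsj)
      · -- s s
        exact absurd hadj (fun ha => h_s_s i j hi1 hi2 hj1 hj2 ha)
      · -- s old
        exact h_s_old i j hi1 hi2 hj1 hj2 hinsi hinsj hadj
      · -- old f
        exact (h_f_old j i hj1 hi1 hi2 hinsj hinsi (hadjsymm i j hadj)).symm
      · -- old s
        exact (h_s_old j i hj1 hj2 hi1 hi2 hinsj hinsi (hadjsymm i j hadj)).symm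
      · -- old old
        rw [hcol2, extendCol_old G col v cv f s hi1 hi2, extendCol_old G col v cv f s hj1 hj2]
        exact hG1 _ _ hadj (holdS' i hi1 hi2 hinsi) (holdS' j hj1 hj2 hinsj)
    refine ⟨col2, ?_, ?_⟩
    · -- properness
      intro a b hadj hina hinb
      match a, b with
      | Sum.inl u, Sum.inl w =>
        have hadj' : G.Adj u w := hadj
        have hina' : u ∈ S := hina
        have hinb' : w ∈ S := hinb
        by_cases hu : u = v <;> by_cases hw : w = v
        · rw [hu, hw] at hadj'
          exact absurd hadj' (G.loopless.irrefl v)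
        · rw [hcol2, hu, extendCol_inl_v, extendCol_inl G col v cv f s hw]
          exact hcvc w (hTmem w (hu ▸ hadj') hinb')
        · rw [hcol2, hw, extendCol_inl_v, extendCol_inl G col v cv f s hu]
          exact fun he => (hcvc u (hTmem u (hw ▸ hadj'.symm) hina')) he.symm
        · rw [hcol2, extendCol_inl G col v cv f s hu, extendCol_inl G col v cv f s hw]
          exact hG1 _ _ hadj' (Finset.mem_erase.mpr ⟨hu, hina'⟩)
            (Finset.mem_erase.mpr ⟨hw, hinb'⟩)
      | Sum.inl u, Sum.inr i => exact hkey_vi u i hadj hina hinb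
      | Sum.inr i, Sum.inl u => exact (hkey_vi u i hadj hinb hina).symm
      | Sum.inr i, Sum.inr j => exact hkey_ii i j hadj hina hinb
    · -- the I₂ bound
      intro u huS
      by_cases huv : u = v
      · have hsub : Aset G col2 S u ⊆ T.image s := by
          intro x hx
          obtain ⟨w, hw, hxval⟩ := Finset.mem_image.mp hx
          rw [nbrsIn, Finset.mem_inter, SimpleGraph.mem_neighborFinset] at hw
          obtain ⟨hadjuw, hwS⟩ := hw
          have hadjwu : G.Adj w u := hadjuw.symm
          have hwT : w ∈ T := by
            refine hTmem w ?_ hwS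
            rw [← huv]; exact hadjuw
          refine Finset.mem_image.mpr ⟨w, hwT, ?_⟩
          rw [← hxval, colInc_eval G col2 hadjwu]
          have h2 : otherV G (vinc G hadjwu) = v := (other_vinc G hadjwu).trans huv
          rw [hcol2, extendCol_s G col v cv f s (by
            show w ≠ v
            exact (hTfact w hwT).2.2.1) h2]
          rfl
        calc (Aset G col2 S u).card ≤ (T.image s).card := Finset.card_le_card hsub
        _ ≤ T.card := Finset.card_image_le
        _ ≤ 3 := hTcard
      · by_cases huT : u ∈ T
        · have hsub : Aset G col2 S u ⊆ Aset G col S' u ∪ {f u} := by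
            intro x hx
            obtain ⟨w, hw, hxval⟩ := Finset.mem_image.mp hx
            rw [nbrsIn, Finset.mem_inter, SimpleGraph.mem_neighborFinset] at hw
            obtain ⟨hadjuw, hwS⟩ := hw
            have hadjwu : G.Adj w u := hadjuw.symm
            rw [Finset.mem_union, Finset.mem_singleton]
            by_cases hwv : w = v
            · right
              rw [← hxval, colInc_eval G col2 hadjwu]
              have h2 : otherV G (vinc G hadjwu) = u := other_vinc G hadjwu
              rw [hcol2, extendCol_f G col v cv f s (by show w = v; exact hwv), h2]
            · left
              rw [← hxval, colInc_eval G col2 hadjwu]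
              have h2 : otherV G (vinc G hadjwu) = u := other_vinc G hadjwu
              rw [hcol2, extendCol_old G col v cv f s (by show w ≠ v; exact hwv)
                (by rw [h2]; exact huv)]
              rw [← colInc_eval G col hadjwu]
              refine Finset.mem_image.mpr ⟨w, ?_, rfl⟩
              rw [nbrsIn, Finset.mem_inter, SimpleGraph.mem_neighborFinset]
              exact ⟨hadjuw, Finset.mem_erase.mpr ⟨hwv, hwS⟩⟩
          calc (Aset G col2 S u).card ≤ (Aset G col S' u ∪ {f u}).card :=
            Finset.card_le_card hsub
          _ ≤ 3 := hfA u huT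
        · have hsub : Aset G col2 S u ⊆ Aset G col S' u := by
            intro x hx
            obtain ⟨w, hw, hxval⟩ := Finset.mem_image.mp hx
            rw [nbrsIn, Finset.mem_inter, SimpleGraph.mem_neighborFinset] at hw
            obtain ⟨hadjuw, hwS⟩ := hw
            have hadjwu : G.Adj w u := hadjuw.symm
            have hwv : w ≠ v := by
              intro he
              subst he
              exact huT (hTmem u hadjwu huS)
            rw [← hxval, colInc_eval G col2 hadjwu]
            have h2 : otherV G (vinc G hadjwu) = u := other_vinc G hadjwu
            rw [hcol2, extendCol_old G col v cv f s (by show w ≠ v; exact hwv)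
              (by rw [h2]; exact huv)]
            rw [← colInc_eval G col hadjwu]
            refine Finset.mem_image.mpr ⟨w, ?_, rfl⟩
            rw [nbrsIn, Finset.mem_inter, SimpleGraph.mem_neighborFinset]
            exact ⟨hadjuw, Finset.mem_erase.mpr ⟨hwv, hwS⟩⟩
          calc (Aset G col2 S u).card ≤ (Aset G col S' u).card := Finset.card_le_card hsub
          _ ≤ 3 := hG2 u (Finset.mem_erase.mpr ⟨huv, huS⟩)

end MainInduction

/-- Every 3-degenerate finite simple graph `G` with maximum degree
`Δ(G) ≥ 5` admits a vi-simultaneous `(Δ(G)+5, 3)`-coloring; consequently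
`χ_{vi,3}(G) ≤ Δ(G) + 5`. -/
theorem chiVIS_three_degenerate {V : Type*} [Fintype V] [DecidableEq V]
    (G : SimpleGraph V) (hdeg : Degenerate 3 G) (hΔ : 5 ≤ maxDeg G) :
    (∃ c : VIElem G → Fin (maxDeg G + 5), IsVISColoring G 3 c) ∧
    chiVIS G 3 ≤ maxDeg G + 5 := by
  haveI : DecidableRel G.Adj := Classical.decRel _
  obtain ⟨c, hc1, hc2⟩ := exists_good_all G hdeg hΔ Finset.univ
  have hins : ∀ a : VIElem G, InS G Finset.univ a := by
    intro a
    cases a with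
    | inl u => exact Finset.mem_univ u
    | inr i => exact ⟨Finset.mem_univ _, Finset.mem_univ _⟩
  have hVIS : IsVISColoring G 3 c := by
    constructor
    · intro a b hadj
      exact hc1 a b hadj (hins a) (hins b)
    · intro v₀
      have hsub : (fun i => c (Sum.inr i)) '' I2 G v₀ ⊆ ↑(Aset G c Finset.univ v₀) := by
        rintro x ⟨i, hi, rfl⟩
        obtain ⟨hi1, hi2⟩ := hi
        have hov : otherV G i = v₀ := by
          have h := (other_edge G i).symm.trans hi2
          rcases Sym2.eq_iff.mp h with ⟨_, hb⟩ | ⟨ha, hb⟩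
          · exact hb
          · exact absurd ha hi1
        exact Finset.mem_coe.mpr
          (mem_Aset_of G c Finset.univ v₀ i hov (Finset.mem_univ _))
      calc ((fun i => c (Sum.inr i)) '' I2 G v₀).ncard
          ≤ (↑(Aset G c Finset.univ v₀) : Set (Fin (maxDeg G + 5))).ncard :=
            Set.ncard_le_ncard hsub (Finset.finite_toSet _)
      _ = (Aset G c Finset.univ v₀).card := Set.ncard_coe_finset _
      _ ≤ 3 := hc2 v₀ (Finset.mem_univ v₀)
  refine ⟨⟨c, hVIS⟩, ?_⟩
  exact Nat.sInf_le ⟨c, hVIS⟩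
end

section
/- Let n ≥ 2 and let G be a finite simple graph on n vertices. Then χ_{vi,1}(G) = 2n if and only if G is isomorphic to the complete graph K_n. -/
open SimpleGraph

variable {V : Type*}

noncomputable def Inc.snd {G : SimpleGraph V} (i : Inc G) : V := Sym2.Mem.other i.2.2

lemma Inc.snd_spec {G : SimpleGraph V} (i : Inc G) : s(i.1.1, i.snd) = i.1.2 :=
  Sym2.other_spec i.2.2

lemma Inc.snd_ne {G : SimpleGraph V} (i : Inc G) : i.snd ≠ i.1.1 :=
  Sym2.other_ne (G.not_isDiag_of_mem_edgeSet i.2.1) i.2.2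

lemma mem_I2_iff {G : SimpleGraph V} {i : Inc G} {v : V} : i ∈ I2 G v ↔ i.snd = v := by
  constructor
  · rintro ⟨hne, he⟩
    have h2 : s(i.1.1, i.snd) = s(i.1.1, v) := by rw [i.snd_spec, he]
    exact Sym2.congr_right.mp h2
  · rintro rfl
    exact ⟨i.snd_ne.symm, i.snd_spec.symm⟩

lemma not_viadj_of_snd_eq {G : SimpleGraph V} {i j : Inc G} (hij : i ≠ j)
    (h : i.snd = j.snd) : ¬ VIAdj G (Sum.inr i) (Sum.inr j) := by
  have hi := i.snd_spec
  have hj := j.snd_spec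
  have hvi := i.snd_ne
  have hvj := j.snd_ne
  have huw : i.1.1 ≠ j.1.1 := by
    intro huw
    apply hij
    apply Subtype.ext
    apply Prod.ext huw
    rw [← hi, ← hj, huw, h]
  rintro ⟨-, h1 | h2 | h3 | h4⟩
  · exact huw h1
  · rw [← hi, ← hj, h] at h2
    exact huw (Sym2.congr_left.mp h2)
  · rw [← hi] at h3
    exact hvj ((h ▸ Sym2.congr_right.mp h3).symm)
  · rw [← hj, Sym2.eq_iff] at h4
    rcases h4 with ⟨h5, -⟩ | ⟨h5, -⟩
    · exact huw h5
    · exact hvi (by rw [h]; exact h5.symm)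

lemma exists_vis_coloring_general [Fintype V] [DecidableEq V] (G : SimpleGraph V) (n : ℕ)
    (hcard : Fintype.card V = n) :
    ∃ c : VIElem G → Fin (2 * n), IsVISColoring G 1 c := by
  classical
  let e : V ≃ Fin n := Fintype.equivFinOfCardEq hcard
  refine ⟨Sum.elim (fun v => ⟨(e v : ℕ), by have := (e v).isLt; omega⟩)
      (fun i => ⟨n + (e i.snd : ℕ), by have := (e i.snd).isLt; omega⟩), ?_, ?_⟩
  · rintro (u | i) (w | j) hadj hc <;>
      simp only [Sum.elim_inl, Sum.elim_inr, Fin.mk.injEq] at hc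
    · exact (G.ne_of_adj hadj) (e.injective (Fin.val_injective hc))
    · have := (e u).isLt; omega
    · have := (e w).isLt; omega
    · have hs : i.snd = j.snd := e.injective (Fin.val_injective (by omega))
      exact not_viadj_of_snd_eq hadj.1 hs hadj
  · intro v
    rw [Set.ncard_le_one_iff]
    rintro x y ⟨i, hi, rfl⟩ ⟨j, hj, rfl⟩
    rw [mem_I2_iff] at hi hj
    simp only [Sum.elim_inr, Fin.mk.injEq]
    rw [hi, hj]

lemma exists_vis_coloring_noncomplete [Fintype V] [DecidableEq V] (G : SimpleGraph V) (n : ℕ)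
    (hn : 2 ≤ n) (hcard : Fintype.card V = n) {a b : V} (hab : a ≠ b) (hnadj : ¬ G.Adj a b) :
    ∃ c : VIElem G → Fin (2 * n - 1), IsVISColoring G 1 c := by
  classical
  let e0 : V ≃ Fin n := Fintype.equivFinOfCardEq hcard
  let e : V ≃ Fin n := e0.trans (Equiv.swap (e0 b) ⟨n - 1, by omega⟩)
  have heb : (e b : ℕ) = n - 1 := by simp [e, Equiv.swap_apply_left]
  have hgb : ∀ v : V, v ≠ b → (e v : ℕ) < n - 1 := by
    intro v hv
    have h1 : (e v : ℕ) ≠ n - 1 := by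
      rw [← heb]; exact fun h => hv (e.injective (Fin.val_injective h))
    have := (e v).isLt
    omega
  set g : V → ℕ := fun v => if v = b then (e a : ℕ) else (e v : ℕ) with hg
  have hglt : ∀ v, g v < n - 1 := by
    intro v
    by_cases hv : v = b
    · simpa [hg, hv] using hgb a hab
    · simpa [hg, hv] using hgb v hv
  have hgadj : ∀ v w, G.Adj v w → g v ≠ g w := by
    intro v w hvw hEq
    simp only [hg] at hEq
    split_ifs at hEq with hv hw hw
    · exact G.ne_of_adj hvw (hv.trans hw.symm)
    · have h2 : a = w := e.injective (Fin.val_injective hEq)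
      exact hnadj (by rw [h2, ← hv]; exact hvw.symm)
    · have h2 : v = a := e.injective (Fin.val_injective hEq)
      exact hnadj (by rw [← h2, ← hw]; exact hvw)
    · exact G.ne_of_adj hvw (e.injective (Fin.val_injective hEq))
  refine ⟨Sum.elim (fun v => ⟨g v, by have := hglt v; omega⟩)
      (fun i => ⟨(n - 1) + (e i.snd : ℕ), by have := (e i.snd).isLt; omega⟩), ?_, ?_⟩
  · rintro (u | i) (w | j) hadj hc <;>
      simp only [Sum.elim_inl, Sum.elim_inr, Fin.mk.injEq] at hc
    · exact hgadj u w hadj hc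
    · have := hglt u; omega
    · have := hglt w; omega
    · have hs : i.snd = j.snd := e.injective (Fin.val_injective (by omega))
      exact not_viadj_of_snd_eq hadj.1 hs hadj
  · intro v
    rw [Set.ncard_le_one_iff]
    rintro x y ⟨i, hi, rfl⟩ ⟨j, hj, rfl⟩
    rw [mem_I2_iff] at hi hj
    simp only [Sum.elim_inr, Fin.mk.injEq]
    rw [hi, hj]

lemma two_mul_card_le_of_complete [Fintype V] [DecidableEq V] (G : SimpleGraph V)
    (hcomp : ∀ u v : V, u ≠ v → G.Adj u v) (hn : 2 ≤ Fintype.card V)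
    {k : ℕ} (c : VIElem G → Fin k) (hc : IsVISColoring G 1 c) :
    2 * Fintype.card V ≤ k := by
  classical
  have hex : ∀ v : V, ∃ u : V, u ≠ v := fun v =>
    Fintype.exists_ne_of_one_lt_card (by omega) v
  choose u hu using hex
  have hinc : ∀ (w v : V), w ≠ v → s(w, v) ∈ G.edgeSet ∧ (w : V) ∈ s(w, v) :=
    fun w v h => ⟨G.mem_edgeSet.mpr (hcomp w v h), Sym2.mem_mk_left w v⟩
  let inc : ∀ (w v : V), w ≠ v → Inc G := fun w v h => ⟨(w, s(w, v)), hinc w v h⟩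
  have hincI2 : ∀ (w v : V) (h : w ≠ v), inc w v h ∈ I2 G v := fun w v h => ⟨h, rfl⟩
  let f : V → Fin k := fun v => c (Sum.inr (inc (u v) v (hu v)))
  have hall : ∀ (v : V) (i : Inc G), i ∈ I2 G v → c (Sum.inr i) = f v := by
    intro v i hi
    have h1 := hc.2 v
    rw [Set.ncard_le_one_iff] at h1
    exact h1 ⟨i, hi, rfl⟩ ⟨_, hincI2 (u v) v (hu v), rfl⟩
  have hf : Function.Injective (Sum.elim (fun v => c (Sum.inl v)) f : V ⊕ V → Fin k) := by
    rintro (x | x) (y | y) hxy <;> simp only [Sum.elim_inl, Sum.elim_inr] at hxy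
    · by_contra hne
      have hne' : x ≠ y := fun h => hne (by rw [h])
      exact hc.1 (Sum.inl x) (Sum.inl y) (hcomp x y hne') hxy
    · exfalso
      by_cases hxv : x = y
      · subst hxv
        exact hc.1 (Sum.inl x) (Sum.inr (inc (u x) x (hu x)))
          (Sym2.mem_mk_right _ _) hxy
      · have h2 := hall y _ (hincI2 x y hxv)
        exact hc.1 (Sum.inl x) (Sum.inr (inc x y hxv))
          (Sym2.mem_mk_left _ _) (hxy.trans h2.symm)
    · exfalso
      by_cases hxv : y = x
      · subst hxv
        exact hc.1 (Sum.inl y) (Sum.inr (inc (u y) y (hu y)))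
          (Sym2.mem_mk_right _ _) hxy.symm
      · have h2 := hall x _ (hincI2 y x hxv)
        exact hc.1 (Sum.inl y) (Sum.inr (inc y x hxv))
          (Sym2.mem_mk_left _ _) (hxy.symm.trans h2.symm)
    · by_contra hne
      have hne' : x ≠ y := fun h => hne (by rw [h])
      have h1 := hall x _ (hincI2 y x (Ne.symm hne'))
      have h2 := hall y _ (hincI2 x y hne')
      refine hc.1 (Sum.inr (inc y x (Ne.symm hne'))) (Sum.inr (inc x y hne'))
        ⟨?_, Or.inr (Or.inl ?_)⟩ (by rw [h1, h2, hxy])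
      · intro h
        exact hne' (congrArg (fun i : Inc G => i.1.1) h).symm
      · exact Sym2.eq_swap
  calc 2 * Fintype.card V = Fintype.card (V ⊕ V) := by rw [Fintype.card_sum]; ring
    _ ≤ Fintype.card (Fin k) := Fintype.card_le_of_injective _ hf
    _ = k := Fintype.card_fin k

/-- Let `n ≥ 2` and let `G` be a finite simple graph on `n` vertices.
Then `χ_{vi,1}(G) = 2n` iff `G` is isomorphic to the complete graph `K_n`. -/
theorem chiVIS_one_eq_two_mul_iff_complete {V : Type*} [Fintype V] [DecidableEq V]
    (G : SimpleGraph V) (n : ℕ) (hn : 2 ≤ n) (hcard : Fintype.card V = n) :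
    chiVIS G 1 = 2 * n ↔ Nonempty (G ≃g (⊤ : SimpleGraph (Fin n))) := by
  have hV2 : 2 ≤ Fintype.card V := hcard ▸ hn
  constructor
  · intro h
    have hcomp : ∀ u v : V, u ≠ v → G.Adj u v := by
      by_contra hnc
      push_neg at hnc
      obtain ⟨a, b, hab, hnadj⟩ := hnc
      obtain ⟨c, hc⟩ := exists_vis_coloring_noncomplete G n hn hcard hab hnadj
      have h2 : chiVIS G 1 ≤ 2 * n - 1 := Nat.sInf_le ⟨c, hc⟩
      omega
    exact ⟨{ toEquiv := Fintype.equivFinOfCardEq hcard,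
             map_rel_iff' := by
               intro u v
               simp only [top_adj, ne_eq, EmbeddingLike.apply_eq_iff_eq]
               exact ⟨fun h' => hcomp u v h', fun h' => G.ne_of_adj h'⟩ }⟩
  · rintro ⟨φ⟩
    have hcomp : ∀ u v : V, u ≠ v → G.Adj u v := by
      intro u v huv
      have h2 : (⊤ : SimpleGraph (Fin n)).Adj (φ u) (φ v) := by
        simp only [top_adj]
        exact fun h => huv (φ.toEquiv.injective h)
      exact φ.map_rel_iff.mp h2
    obtain ⟨c, hc⟩ := exists_vis_coloring_general G n hcard
    refine le_antisymm (Nat.sInf_le ⟨c, hc⟩) (le_csInf ⟨2 * n, c, hc⟩ ?_)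
    rintro k ⟨c', hc'⟩
    have h3 := two_mul_card_le_of_complete G hcomp hV2 c' hc'
    rw [hcard] at h3
    exact h3
end

section
/- Let G be a k-regular bipartite finite simple graph with k ≥ 4 whose two parts each have n vertices. Then χ_vi(G) ≤ min{n+3, 2k}. -/
open SimpleGraph

variable {V : Type*}

lemma chiVI_le_card {G : SimpleGraph V} {X : Type*} [Fintype X] {m : ℕ}
    (hm : Fintype.card X = m) (c : VIElem G → X)
    (h : ∀ a b, VIAdj G a b → c a ≠ c b) : chiVI G ≤ m := by
  have e : X ≃ Fin m := Fintype.equivFinOfCardEq hm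
  exact Nat.sInf_le ⟨fun z => e (c z), fun a b hab hc => h a b hab (e.injective hc)⟩

namespace VIAux

/-! Combinatorial pattern for the `n+3` coloring of bipartite graphs with parts of size `n`. -/

variable (n : ℕ)

def Lf (j : ZMod n) : Fin 3 := if j = 0 then 1 else 0
def Lf' (j : ZMod n) : Fin 3 := if j = 0 then 0 else 1
def df (j : ZMod n) : ZMod n := if j = 0 then 2 else 1
def Ff (i j : ZMod n) : ZMod n ⊕ Fin 3 := if j = i - 1 then Sum.inr 2 else Sum.inl (j + 1)
def Gf (i j : ZMod n) : ZMod n ⊕ Fin 3 :=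
  if i = j + 1 then Sum.inr (Lf n j) else if i = df n j then Sum.inr (Lf' n j) else Sum.inl i
def vaf (i : ZMod n) : ZMod n ⊕ Fin 3 := Sum.inr (if i = 1 then 0 else 1)
def vbf (j : ZMod n) : ZMod n ⊕ Fin 3 := Sum.inl (df n j)

variable {n}
variable [Fact (1 < n)]

lemma h21 : (2 : ZMod n) ≠ 1 := by
  intro h
  apply (one_ne_zero : (1 : ZMod n) ≠ 0)
  calc (1 : ZMod n) = 2 - 1 := by ring
  _ = 1 - 1 := by rw [h]
  _ = 0 := by ring

lemma df_ne (j : ZMod n) : df n j ≠ j + 1 := by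
  unfold df
  split_ifs with h
  · rw [h]; simpa using h21
  · intro hh
    apply h
    have : j + 1 = 0 + 1 := by rw [← hh]; ring
    exact add_right_cancel this

lemma LL' (j : ZMod n) : Lf n j ≠ Lf' n j := by
  unfold Lf Lf'; split_ifs <;> decide

lemma Lf_ne_two (j : ZMod n) : Lf n j ≠ 2 := by
  unfold Lf; split_ifs <;> decide

lemma Lf'_ne_two (j : ZMod n) : Lf' n j ≠ 2 := by
  unfold Lf'; split_ifs <;> decide

lemma I1 {i j j' : ZMod n} (hjj : j ≠ j') : Ff n i j ≠ Ff n i j' := by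
  unfold Ff
  split_ifs with hc1 hc2 hc2
  · intro hh; exact hjj (hc1.trans hc2.symm)
  · simp
  · simp
  · simp only [ne_eq, Sum.inl.injEq]
    intro hh; exact hjj (add_right_cancel hh)

lemma I2 {i i' : ZMod n} (j : ZMod n) (hii : i ≠ i') : Gf n i j ≠ Gf n i' j := by
  unfold Gf
  intro hcc
  by_cases h1 : i = j + 1
  · rw [if_pos h1] at hcc
    by_cases h2 : i' = j + 1
    · exact hii (h1.trans h2.symm)
    · rw [if_neg h2] at hcc
      by_cases h4 : i' = df n j
      · rw [if_pos h4] at hcc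
        exact LL' j (Sum.inr.inj hcc)
      · rw [if_neg h4] at hcc; simp at hcc
  · rw [if_neg h1] at hcc
    by_cases h3 : i = df n j
    · rw [if_pos h3] at hcc
      by_cases h2 : i' = j + 1
      · rw [if_pos h2] at hcc
        exact LL' j (Sum.inr.inj hcc).symm
      · rw [if_neg h2] at hcc
        by_cases h4 : i' = df n j
        · exact hii (h3.trans h4.symm)
        · rw [if_neg h4] at hcc; simp at hcc
    · rw [if_neg h3] at hcc
      by_cases h2 : i' = j + 1
      · rw [if_pos h2] at hcc; simp at hcc
      · rw [if_neg h2] at hcc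
        by_cases h4 : i' = df n j
        · rw [if_pos h4] at hcc; simp at hcc
        · rw [if_neg h4] at hcc
          exact hii (Sum.inl.inj hcc)

lemma gf_aux {i j : ZMod n} (h : Gf n i j = Sum.inl i ∨ (Gf n i j = Sum.inr (Lf n j) ∧ i = j + 1) ∨ (Gf n i j = Sum.inr (Lf' n j) ∧ i = df n j)) : True := trivial

lemma Gf_cases (i j : ZMod n) :
    (Gf n i j = Sum.inr (Lf n j) ∧ i = j + 1) ∨
      (Gf n i j = Sum.inr (Lf' n j) ∧ i = df n j) ∨
      (Gf n i j = Sum.inl i ∧ i ≠ j + 1 ∧ i ≠ df n j) := by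
  unfold Gf
  by_cases h1 : i = j + 1
  · exact Or.inl ⟨if_pos h1, h1⟩
  · rw [if_neg h1]
    by_cases h2 : i = df n j
    · exact Or.inr (Or.inl ⟨if_pos h2, h2⟩)
    · exact Or.inr (Or.inr ⟨if_neg h2, h1, h2⟩)

lemma I3 (i i' j : ZMod n) : Ff n i j ≠ Gf n i' j := by
  rcases Gf_cases i' j with ⟨hg, _⟩ | ⟨hg, _⟩ | ⟨hg, hne, _⟩ <;> rw [hg] <;> unfold Ff <;>
      split_ifs with hf
  · simp only [ne_eq, Sum.inr.injEq]
    exact fun hh => Lf_ne_two j hh.symm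
  · simp
  · simp only [ne_eq, Sum.inr.injEq]
    exact fun hh => Lf'_ne_two j hh.symm
  · simp
  · simp
  · simp only [ne_eq, Sum.inl.injEq]
    intro hh; exact hne hh.symm

lemma I4 (i j j' : ZMod n) : Ff n i j ≠ Gf n i j' := by
  rcases Gf_cases i j' with ⟨hg, _⟩ | ⟨hg, _⟩ | ⟨hg, _⟩ <;> rw [hg] <;> unfold Ff <;>
      split_ifs with hf
  · simp only [ne_eq, Sum.inr.injEq]
    exact fun hh => Lf_ne_two j' hh.symm
  · simp
  · simp only [ne_eq, Sum.inr.injEq]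
    exact fun hh => Lf'_ne_two j' hh.symm
  · simp
  · simp
  · simp only [ne_eq, Sum.inl.injEq]
    intro hh
    exact hf (by rw [← hh]; ring)

lemma VaF (i i' j : ZMod n) : vaf n i ≠ Ff n i' j := by
  unfold vaf Ff
  split_ifs with h1 h2 h2 <;> simp <;> decide

lemma VaG (i j : ZMod n) : vaf n i ≠ Gf n i j := by
  rcases Gf_cases i j with ⟨hg, hc⟩ | ⟨hg, hc⟩ | ⟨hg, _⟩ <;> rw [hg] <;> unfold vaf
  · simp only [ne_eq, Sum.inr.injEq]
    by_cases hj : j = 0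
    · have hi : i = 1 := by rw [hc, hj, zero_add]
      rw [if_pos hi]
      unfold Lf; rw [if_pos hj]; decide
    · have hi : i ≠ 1 := by
        rw [hc]; intro hh
        exact hj (add_right_cancel (hh.trans (zero_add (1 : ZMod n)).symm))
      rw [if_neg hi]
      unfold Lf; rw [if_neg hj]; decide
  · simp only [ne_eq, Sum.inr.injEq]
    by_cases hj : j = 0
    · have hi : i ≠ 1 := by
        rw [hc]; unfold df; rw [if_pos hj]; exact h21
      rw [if_neg hi]
      unfold Lf'; rw [if_pos hj]; decide
    · have hi : i = 1 := by rw [hc]; unfold df; rw [if_neg hj]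
      rw [if_pos hi]
      unfold Lf'; rw [if_neg hj]; decide
  · simp

lemma VbF (i j : ZMod n) : vbf n j ≠ Ff n i j := by
  unfold vbf Ff
  split_ifs with h1
  · simp
  · simp only [ne_eq, Sum.inl.injEq]
    exact df_ne j

lemma VbG (i j : ZMod n) : vbf n j ≠ Gf n i j := by
  rcases Gf_cases i j with ⟨hg, _⟩ | ⟨hg, _⟩ | ⟨hg, _, hd⟩ <;> rw [hg] <;> unfold vbf
  · simp
  · simp
  · simp only [ne_eq, Sum.inl.injEq]
    intro hh; exact hd hh.symm

lemma VaVb (i j : ZMod n) : vaf n i ≠ vbf n j := by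
  unfold vaf vbf; simp

end VIAux

lemma bound_nplus3 [Fintype V] [DecidableEq V]
    (G : SimpleGraph V) (A B : Set V) (n : ℕ) (hn : 4 ≤ n)
    (hdisj : Disjoint A B) (hcover : A ∪ B = Set.univ)
    (hbip : ∀ x y : V, G.Adj x y → (x ∈ A ∧ y ∈ B) ∨ (x ∈ B ∧ y ∈ A))
    (hA : A.ncard = n) (hB : B.ncard = n) :
    chiVI G ≤ n + 3 := by
  classical
  haveI : NeZero n := ⟨by omega⟩
  haveI : Fact (1 < n) := ⟨by omega⟩
  have side : ∀ v : V, v ∈ A ∨ v ∈ B := fun v => by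
    have : v ∈ A ∪ B := by rw [hcover]; trivial
    exact this
  have hAB : ∀ v ∈ A, v ∉ B := fun v hv => Set.disjoint_left.mp hdisj hv
  have hBA : ∀ v ∈ B, v ∉ A := fun v hv hv' => Set.disjoint_left.mp hdisj hv' hv
  have adjAB : ∀ {x y : V}, G.Adj x y → x ∈ A → y ∈ B := by
    intro x y hxy hx
    rcases hbip x y hxy with ⟨_, h⟩ | ⟨h, _⟩
    · exact h
    · exact absurd hx (hBA x h)
  have adjBA : ∀ {x y : V}, G.Adj x y → x ∈ B → y ∈ A := by
    intro x y hxy hx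
    rcases hbip x y hxy with ⟨h, _⟩ | ⟨_, h⟩
    · exact absurd hx (hAB x h)
    · exact h
  have hAcard : Fintype.card ↥A = n := by
    rwa [Set.ncard_eq_toFinset_card', Set.toFinset_card] at hA
  have hBcard : Fintype.card ↥B = n := by
    rwa [Set.ncard_eq_toFinset_card', Set.toFinset_card] at hB
  let eA : ↥A ≃ Fin n := Fintype.equivFinOfCardEq hAcard
  let eB : ↥B ≃ Fin n := Fintype.equivFinOfCardEq hBcard
  let ia : V → ZMod n := fun v => if h : v ∈ A then ((eA ⟨v, h⟩).val : ZMod n) else 0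
  let ib : V → ZMod n := fun v => if h : v ∈ B then ((eB ⟨v, h⟩).val : ZMod n) else 0
  have ia_inj : ∀ v ∈ A, ∀ w ∈ A, ia v = ia w → v = w := by
    intro v hv w hw h
    simp only [ia, dif_pos hv, dif_pos hw] at h
    have h2 := congrArg ZMod.val h
    rw [ZMod.val_cast_of_lt (eA ⟨v, hv⟩).isLt, ZMod.val_cast_of_lt (eA ⟨w, hw⟩).isLt] at h2
    have := eA.injective (Fin.ext h2)
    exact congrArg Subtype.val this
  have ib_inj : ∀ v ∈ B, ∀ w ∈ B, ib v = ib w → v = w := by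
    intro v hv w hw h
    simp only [ib, dif_pos hv, dif_pos hw] at h
    have h2 := congrArg ZMod.val h
    rw [ZMod.val_cast_of_lt (eB ⟨v, hv⟩).isLt, ZMod.val_cast_of_lt (eB ⟨w, hw⟩).isLt] at h2
    have := eB.injective (Fin.ext h2)
    exact congrArg Subtype.val this
  -- incidence structure
  let oth : Inc G → V := fun inc => Sym2.Mem.other inc.2.2
  have oth_spec : ∀ inc : Inc G, inc.1.2 = s(inc.1.1, oth inc) :=
    fun inc => (Sym2.other_spec inc.2.2).symm
  have oth_adj : ∀ inc : Inc G, G.Adj inc.1.1 (oth inc) := fun inc => by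
    rw [← SimpleGraph.mem_edgeSet, ← oth_spec inc]; exact inc.2.1
  have oth_uniq : ∀ (inc : Inc G) (w : V), inc.1.2 = s(inc.1.1, w) → w = oth inc := by
    intro inc w h
    exact (Sym2.congr_right.mp ((oth_spec inc).symm.trans h)).symm
  -- the coloring
  let cV : V → (ZMod n ⊕ Fin 3) := fun v =>
    if v ∈ A then VIAux.vaf n (ia v) else VIAux.vbf n (ib v)
  let cI : Inc G → (ZMod n ⊕ Fin 3) := fun inc =>
    if inc.1.1 ∈ A then VIAux.Ff n (ia inc.1.1) (ib (oth inc))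
    else VIAux.Gf n (ia (oth inc)) (ib inc.1.1)
  apply chiVI_le_card (X := ZMod n ⊕ Fin 3) (by simp [ZMod.card]) (Sum.elim cV cI)
  have key2 : ∀ (u : V) (inc : Inc G), u ∈ inc.1.2 → cV u ≠ cI inc := by
    intro u inc hu
    have hadj := oth_adj inc
    rw [oth_spec inc, Sym2.mem_iff] at hu
    rcases side inc.1.1 with hvA | hvB
    · have hoB : oth inc ∈ B := adjAB hadj hvA
      have hcI : cI inc = VIAux.Ff n (ia inc.1.1) (ib (oth inc)) := if_pos hvA
      rcases hu with rfl | rfl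
      · rw [hcI]
        simp only [cV, if_pos hvA]
        exact VIAux.VaF _ _ _
      · rw [hcI]
        simp only [cV, if_neg (hBA _ hoB)]
        exact VIAux.VbF _ _
    · have hoA : oth inc ∈ A := adjBA hadj hvB
      have hcI : cI inc = VIAux.Gf n (ia (oth inc)) (ib inc.1.1) := if_neg (hBA _ hvB)
      rcases hu with rfl | rfl
      · rw [hcI]
        simp only [cV, if_neg (hBA _ hvB)]
        exact VIAux.VbG _ _
      · rw [hcI]
        simp only [cV, if_pos hoA]
        exact VIAux.VaG _ _
  intro a b hab
  rcases a with u | i <;> rcases b with w | j <;>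
    simp only [Sum.elim_inl, Sum.elim_inr]
  · -- vertex / vertex
    have hadj : G.Adj u w := hab
    rcases side u with huA | huB <;> rcases side w with hwA | hwB
    · exact absurd (adjAB hadj huA) (hAB w hwA)
    · simp only [cV, if_pos huA, if_neg (hBA w hwB)]
      exact VIAux.VaVb _ _
    · simp only [cV, if_neg (hBA u huB), if_pos hwA]
      exact fun hcc => VIAux.VaVb _ _ hcc.symm
    · exact absurd (adjBA hadj huB) (fun h => hAB w h hwB)
  · exact key2 u j hab
  · exact fun hcc => key2 w i hab hcc.symm
  · -- incidence / incidence
    obtain ⟨hij, hcase⟩ := hab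
    have hadi := oth_adj i
    have hadj2 := oth_adj j
    rcases hcase with hvv | hee | hs | hs
    · -- same first vertex
      have he : i.1.2 ≠ j.1.2 := fun he => hij (Subtype.ext (Prod.ext hvv he))
      have ho : oth i ≠ oth j := by
        intro ho; exact he (by rw [oth_spec i, oth_spec j, hvv, ho])
      rcases side i.1.1 with hA1 | hB1
      · have hA2 : j.1.1 ∈ A := hvv ▸ hA1
        have hoB1 : oth i ∈ B := adjAB hadi hA1
        have hoB2 : oth j ∈ B := adjAB hadj2 hA2
        simp only [cI, if_pos hA1, if_pos hA2]
        rw [← hvv]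
        exact VIAux.I1 (fun h => ho (ib_inj _ hoB1 _ hoB2 h))
      · have hB2 : j.1.1 ∈ B := hvv ▸ hB1
        have hoA1 : oth i ∈ A := adjBA hadi hB1
        have hoA2 : oth j ∈ A := adjBA hadj2 hB2
        simp only [cI, if_neg (hBA _ hB1), if_neg (hBA _ hB2)]
        rw [← hvv]
        exact VIAux.I2 _ (fun h => ho (ia_inj _ hoA1 _ hoA2 h))
    · -- same edge
      have hv12 : i.1.1 ≠ j.1.1 := fun h => hij (Subtype.ext (Prod.ext h hee))
      have hj_mem : j.1.1 ∈ i.1.2 := by rw [hee]; exact j.2.2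
      rw [oth_spec i, Sym2.mem_iff] at hj_mem
      have hji : j.1.1 = oth i := hj_mem.resolve_left (fun h => hv12 h.symm)
      have hi_mem : i.1.1 ∈ j.1.2 := by rw [← hee]; exact i.2.2
      rw [oth_spec j, Sym2.mem_iff] at hi_mem
      have hij2 : i.1.1 = oth j := hi_mem.resolve_left hv12
      rcases side i.1.1 with hA1 | hB1
      · have hB2 : j.1.1 ∈ B := hji ▸ adjAB hadi hA1
        simp only [cI, if_pos hA1, if_neg (hBA _ hB2)]
        rw [← hij2, hji]
        exact VIAux.I4 _ _ _
      · have hA2 : j.1.1 ∈ A := hji ▸ adjBA hadi hB1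
        simp only [cI, if_neg (hBA _ hB1), if_pos hA2]
        rw [← hij2, hji]
        exact fun hcc => VIAux.I4 _ _ _ hcc.symm
    · -- s(v1, v2) = e1
      have hadj12 : G.Adj i.1.1 j.1.1 := by
        rw [← SimpleGraph.mem_edgeSet, hs]; exact i.2.1
      have hji : j.1.1 = oth i := oth_uniq i j.1.1 hs.symm
      rcases side i.1.1 with hA1 | hB1
      · have hB2 : j.1.1 ∈ B := adjAB hadj12 hA1
        simp only [cI, if_pos hA1, if_neg (hBA _ hB2)]
        rw [hji]
        exact VIAux.I3 _ _ _
      · have hA2 : j.1.1 ∈ A := adjBA hadj12 hB1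
        simp only [cI, if_neg (hBA _ hB1), if_pos hA2]
        rw [← hji]
        exact fun hcc => VIAux.I4 _ _ _ hcc.symm
    · -- s(v1, v2) = e2
      have hadj12 : G.Adj i.1.1 j.1.1 := by
        rw [← SimpleGraph.mem_edgeSet, hs]; exact j.2.1
      have hij2 : i.1.1 = oth j := oth_uniq j i.1.1 (by rw [← hs, Sym2.eq_swap])
      rcases side i.1.1 with hA1 | hB1
      · have hB2 : j.1.1 ∈ B := adjAB hadj12 hA1
        simp only [cI, if_pos hA1, if_neg (hBA _ hB2)]
        rw [← hij2]
        exact VIAux.I4 _ _ _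
      · have hA2 : j.1.1 ∈ A := adjBA hadj12 hB1
        simp only [cI, if_neg (hBA _ hB1), if_pos hA2]
        rw [← hij2]
        exact fun hcc => VIAux.I3 _ _ _ hcc.symm

lemma fin3_avoid : ∀ u v : Fin 3, ∃ c : Fin 3, c ≠ u ∧ c ≠ v := by decide

lemma perm_coloring {β : Type*} [DecidableEq β] :
    ∀ (N : ℕ) (π : Equiv.Perm β) (s : Finset β), s.card ≤ N →
      (∀ b ∈ s, π b ∈ s) → (∀ b ∈ s, π b ≠ b) →
      ∃ x : β → Fin 3, ∀ b ∈ s, x b ≠ x (π b) := by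
  intro N
  induction N with
  | zero =>
    intro π s hs _ _
    have : s = ∅ := Finset.card_eq_zero.mp (Nat.le_antisymm hs (Nat.zero_le _))
    subst this
    exact ⟨fun _ => 0, fun b hb => absurd hb (Finset.notMem_empty b)⟩
  | succ N ih =>
    intro π s hs hinv hfix
    rcases s.eq_empty_or_nonempty with rfl | ⟨b₀, hb₀⟩
    · exact ⟨fun _ => 0, fun b hb => absurd hb (Finset.notMem_empty b)⟩
    have hπb₀ : π b₀ ≠ b₀ := hfix b₀ hb₀
    by_cases h2 : π (π b₀) = b₀
    · -- b₀ lies on a 2-cycle : remove both its elements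
      set s' := (s.erase b₀).erase (π b₀) with hs'
      have hmem : ∀ b, b ∈ s' ↔ b ∈ s ∧ b ≠ b₀ ∧ b ≠ π b₀ := by
        intro b
        simp only [hs', Finset.mem_erase]
        tauto
      have hinv' : ∀ b ∈ s', π b ∈ s' := by
        intro b hb
        rw [hmem] at hb ⊢
        obtain ⟨hbs, hb1, hb2⟩ := hb
        refine ⟨hinv b hbs, ?_, ?_⟩
        · intro h
          exact hb2 (π.injective (h.trans h2.symm))
        · intro h
          exact hb1 (π.injective h)
      have hfix' : ∀ b ∈ s', π b ≠ b := fun b hb => hfix b ((hmem b).mp hb).1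
      have hcard : s'.card ≤ N := by
        have h1 : s'.card ≤ (s.erase b₀).card := Finset.card_le_card (Finset.erase_subset _ _)
        have h2' : (s.erase b₀).card = s.card - 1 := Finset.card_erase_of_mem hb₀
        have h3 : 1 ≤ s.card := Finset.card_pos.mpr ⟨b₀, hb₀⟩
        omega
      obtain ⟨x, hx⟩ := ih π s' hcard hinv' hfix'
      refine ⟨Function.update (Function.update x b₀ 0) (π b₀) 1, ?_⟩
      intro b hb
      by_cases e1 : b = b₀
      · subst e1
        rw [Function.update_of_ne hπb₀.symm, Function.update_self,
          Function.update_self]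
        decide
      · by_cases e2 : b = π b₀
        · subst e2
          rw [Function.update_self, h2, Function.update_of_ne hπb₀.symm,
            Function.update_self]
          decide
        · have hbs' : b ∈ s' := (hmem b).mpr ⟨hb, e1, e2⟩
          have hp := (hmem _).mp (hinv' b hbs')
          rw [Function.update_of_ne e2, Function.update_of_ne e1,
            Function.update_of_ne hp.2.2, Function.update_of_ne hp.2.1]
          exact hx b hbs'
    · -- splice b₀ out of its cycle
      set τ := Equiv.swap b₀ (π b₀) with hτ
      set π' := π.trans τ with hπ'
      set s' := s.erase b₀ with hs'
      have hπ'app : ∀ b, π' b = τ (π b) := fun b => rfl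
      have hinv' : ∀ b ∈ s', π' b ∈ s' := by
        intro b hb
        obtain ⟨hbne, hbs⟩ := Finset.mem_erase.mp hb
        rw [Finset.mem_erase]
        by_cases hcb : π b = b₀
        · rw [hπ'app, hcb, hτ, Equiv.swap_apply_left]
          exact ⟨hπb₀, hinv b₀ hb₀⟩
        · have hcb2 : π b ≠ π b₀ := fun h => hbne (π.injective h)
          rw [hπ'app, hτ, Equiv.swap_apply_of_ne_of_ne hcb hcb2]
          exact ⟨hcb, hinv b hbs⟩
      have hfix' : ∀ b ∈ s', π' b ≠ b := by
        intro b hb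
        obtain ⟨hbne, hbs⟩ := Finset.mem_erase.mp hb
        by_cases hcb : π b = b₀
        · rw [hπ'app, hcb, hτ, Equiv.swap_apply_left]
          intro h
          exact h2 (by rw [h]; exact hcb)
        · have hcb2 : π b ≠ π b₀ := fun h => hbne (π.injective h)
          rw [hπ'app, hτ, Equiv.swap_apply_of_ne_of_ne hcb hcb2]
          exact hfix b hbs
      have hcard : s'.card ≤ N := by
        have h2' : s'.card = s.card - 1 := Finset.card_erase_of_mem hb₀
        have h3 : 1 ≤ s.card := Finset.card_pos.mpr ⟨b₀, hb₀⟩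
        omega
      obtain ⟨x, hx⟩ := ih π' s' hcard hinv' hfix'
      obtain ⟨c₀, hc₀⟩ := fin3_avoid (x (π b₀)) (x (π.symm b₀))
      refine ⟨Function.update x b₀ c₀, ?_⟩
      intro b hb
      by_cases e1 : b = b₀
      · subst e1
        rw [Function.update_self, Function.update_of_ne hπb₀]
        exact hc₀.1
      · by_cases hcb : π b = b₀
        · have hbsymm : π.symm b₀ = b := by rw [← hcb, Equiv.symm_apply_apply]
          rw [Function.update_of_ne e1, hcb, Function.update_self]
          intro h
          exact hc₀.2 (by rw [hbsymm, ← h])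
        · have hbs' : b ∈ s' := Finset.mem_erase.mpr ⟨e1, hb⟩
          have hπeq : π' b = π b := by
            rw [hπ'app, hτ, Equiv.swap_apply_of_ne_of_ne hcb
              (fun h => e1 (π.injective h))]
          rw [Function.update_of_ne e1, Function.update_of_ne hcb]
          have := hx b hbs'
          rwa [hπeq] at this

lemma hall_cond [Fintype V] [DecidableEq V] {A : Set V} (t : ↥A → Finset V) (d : ℕ)
    (hd : 1 ≤ d) (hcard : ∀ a, d ≤ (t a).card)
    (hbound : ∀ (b : V) (s : Finset ↥A), ((s.filter (fun a => b ∈ t a)).card) ≤ d)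
    (s : Finset ↥A) : s.card ≤ (s.biUnion t).card := by
  classical
  have key : s.card * d ≤ (s.biUnion t).card * d := by
    calc s.card * d = ∑ _a ∈ s, d := by rw [Finset.sum_const, smul_eq_mul]
    _ ≤ ∑ a ∈ s, (t a).card := Finset.sum_le_sum (fun a _ => hcard a)
    _ = ∑ a ∈ s, ((s.biUnion t).filter (· ∈ t a)).card := by
        apply Finset.sum_congr rfl
        intro a ha
        congr 1
        ext b
        simp only [Finset.mem_filter, Finset.mem_biUnion]
        exact ⟨fun hb => ⟨⟨a, ha, hb⟩, hb⟩, fun hb => hb.2⟩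
    _ = ∑ b ∈ s.biUnion t, (s.filter (fun a => b ∈ t a)).card := by
        simp only [Finset.card_filter]
        rw [Finset.sum_comm]
    _ ≤ ∑ _b ∈ s.biUnion t, d := Finset.sum_le_sum (fun b _ => hbound b s)
    _ = (s.biUnion t).card * d := by rw [Finset.sum_const, smul_eq_mul]
  exact Nat.le_of_mul_le_mul_right key hd

lemma exists_missing {γ : Type*} [Fintype γ] [DecidableEq γ] [DecidableEq V]
    (s : Finset V) (f : V → γ)
    (hcard : s.card = Fintype.card γ) (u v : V) (hu : u ∈ s) (hv : v ∈ s) (huv : u ≠ v)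
    (hfuv : f u = f v) : ∃ c : γ, ∀ w ∈ s, f w ≠ c := by
  have hsub : s.image f ⊆ (s.erase u).image f := by
    intro c hc
    obtain ⟨w, hw, rfl⟩ := Finset.mem_image.mp hc
    by_cases hwu : w = u
    · exact Finset.mem_image.mpr ⟨v, Finset.mem_erase.mpr ⟨huv.symm, hv⟩, by rw [hwu, hfuv]⟩
    · exact Finset.mem_image.mpr ⟨w, Finset.mem_erase.mpr ⟨hwu, hw⟩, rfl⟩
  have h1 : (s.image f).card < Fintype.card γ := by
    have e1 : ((s.erase u).image f).card ≤ (s.erase u).card := Finset.card_image_le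
    have e2 : (s.erase u).card = s.card - 1 := Finset.card_erase_of_mem hu
    have e3 : 1 ≤ s.card := Finset.card_pos.mpr ⟨u, hu⟩
    have e4 := Finset.card_le_card hsub
    omega
  obtain ⟨c, hc⟩ : ∃ c : γ, c ∉ s.image f := by
    by_contra h
    push_neg at h
    have hsub2 : (Finset.univ : Finset γ) ⊆ s.image f := fun c _ => h c
    have := Finset.card_le_card hsub2
    rw [Finset.card_univ] at this
    omega
  exact ⟨c, fun w hw hfw => hc (Finset.mem_image.mpr ⟨w, hw, hfw⟩)⟩

lemma exists_labeling [DecidableEq V] (S : Finset V) (k : ℕ) (hS : S.card = k)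
    (a₁ a₂ : V) (h₁ : a₁ ∈ S) (h₂ : a₂ ∈ S) (hne : a₁ ≠ a₂) (c₁ c₂ : Fin k) (hc : c₁ ≠ c₂) :
    ∃ f : V → Fin k, Set.InjOn f ↑S ∧ f a₁ = c₁ ∧ f a₂ = c₂ := by
  classical
  have hk : 0 < k := hS ▸ Finset.card_pos.mpr ⟨a₁, h₁⟩
  have hcard : Fintype.card ↥S = Fintype.card (Fin k) := by
    simp [Fintype.card_coe, hS]
  let e : ↥S ≃ Fin k := Fintype.equivOfCardEq hcard
  let e' := e.trans (Equiv.swap (e ⟨a₁, h₁⟩) c₁)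
  let e'' := e'.trans (Equiv.swap (e' ⟨a₂, h₂⟩) c₂)
  have he1 : e' ⟨a₁, h₁⟩ = c₁ := by
    simp only [e', Equiv.trans_apply, Equiv.swap_apply_left]
  have hne' : (⟨a₁, h₁⟩ : ↥S) ≠ ⟨a₂, h₂⟩ := fun h => hne (congrArg Subtype.val h)
  have he2 : e'' ⟨a₂, h₂⟩ = c₂ := by
    simp only [e'', Equiv.trans_apply, Equiv.swap_apply_left]
  have he3 : e'' ⟨a₁, h₁⟩ = c₁ := by
    have hx : e' ⟨a₁, h₁⟩ ≠ e' ⟨a₂, h₂⟩ := fun h => hne' (e'.injective h)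
    have hx' : c₁ ≠ e' ⟨a₂, h₂⟩ := he1 ▸ hx
    simp only [e'', Equiv.trans_apply]
    rw [he1]
    exact Equiv.swap_apply_of_ne_of_ne hx' hc
  refine ⟨fun v => if h : v ∈ S then e'' ⟨v, h⟩ else ⟨0, hk⟩, ?_, ?_, ?_⟩
  · intro v hv w hw h
    simp only [Finset.mem_coe] at hv hw
    simp only [dif_pos hv, dif_pos hw] at h
    exact congrArg Subtype.val (e''.injective (Fin.ext (congrArg Fin.val h)))
  · simp only [dif_pos h₁]; exact he3
  · simp only [dif_pos h₂]; exact he2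

lemma exists_two_matchings [Fintype V] [DecidableEq V]
    (G : SimpleGraph V) (A B : Set V) (n k : ℕ) (hk : 2 ≤ k)
    (hdisj : Disjoint A B) (hcover : A ∪ B = Set.univ)
    (hbip : ∀ x y : V, G.Adj x y → (x ∈ A ∧ y ∈ B) ∨ (x ∈ B ∧ y ∈ A))
    (hA : A.ncard = n) (hB : B.ncard = n)
    (hreg : ∀ v : V, (G.neighborSet v).ncard = k) :
    ∃ μ₁ μ₂ : ↥A ≃ ↥B, (∀ a : ↥A, G.Adj ↑a ↑(μ₁ a)) ∧ (∀ a : ↥A, G.Adj ↑a ↑(μ₂ a)) ∧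
      (∀ a : ↥A, (μ₁ a : V) ≠ ↑(μ₂ a)) := by
  classical
  have hAB : ∀ v ∈ A, v ∉ B := fun v hv => Set.disjoint_left.mp hdisj hv
  have hBA : ∀ v ∈ B, v ∉ A := fun v hv hv' => Set.disjoint_left.mp hdisj hv' hv
  have adjAB : ∀ {x y : V}, G.Adj x y → x ∈ A → y ∈ B := by
    intro x y hxy hx
    rcases hbip x y hxy with ⟨_, h⟩ | ⟨h, _⟩
    · exact h
    · exact absurd hx (hBA x h)
  have hAcard : Fintype.card ↥A = n := by
    rwa [Set.ncard_eq_toFinset_card', Set.toFinset_card] at hA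
  have hBcard : Fintype.card ↥B = n := by
    rwa [Set.ncard_eq_toFinset_card', Set.toFinset_card] at hB
  have hdeg : ∀ v : V, (G.neighborSet v).toFinset.card = k := by
    intro v
    rw [← Set.ncard_eq_toFinset_card']
    exact hreg v
  have hmemN : ∀ v w : V, w ∈ (G.neighborSet v).toFinset ↔ G.Adj v w := by
    intro v w
    rw [Set.mem_toFinset]
    rfl
  -- first matching
  set t : ↥A → Finset V := fun a => (G.neighborSet ↑a).toFinset with ht
  have hbound : ∀ (b : V) (s : Finset ↥A), ((s.filter (fun a => b ∈ t a)).card) ≤ k := by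
    intro b s
    have : (s.filter (fun a => b ∈ t a)).card ≤ (G.neighborSet b).toFinset.card := by
      apply Finset.card_le_card_of_injOn (f := fun (a : ↥A) => (a : V))
      · intro a ha
        simp only [Finset.mem_coe] at ha ⊢
        rw [hmemN]
        obtain ⟨_, hmem⟩ := Finset.mem_filter.mp ha
        exact ((hmemN _ _).mp hmem).symm
      · intro a _ a' _ h
        exact Subtype.ext h
    rw [hdeg] at this
    exact this
  obtain ⟨f, finj, hf⟩ := (Finset.all_card_le_biUnion_card_iff_exists_injective t).mp
    (hall_cond t k (by omega) (fun a => (hdeg ↑a).ge) hbound)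
  have hfB : ∀ a : ↥A, f a ∈ B := fun a => adjAB ((hmemN _ _).mp (hf a)) a.2
  have hfadj : ∀ a : ↥A, G.Adj ↑a (f a) := fun a => (hmemN _ _).mp (hf a)
  have himg : Finset.univ.image f = B.toFinset := by
    apply Finset.eq_of_subset_of_card_le
    · intro b hb
      obtain ⟨a, _, rfl⟩ := Finset.mem_image.mp hb
      exact Set.mem_toFinset.mpr (hfB a)
    · rw [Finset.card_image_of_injective _ finj, Finset.card_univ, hAcard,
        Set.toFinset_card, hBcard]
  have hsurj : ∀ b ∈ B, ∃ a : ↥A, f a = b := by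
    intro b hb
    have : b ∈ Finset.univ.image f := himg ▸ Set.mem_toFinset.mpr hb
    obtain ⟨a, _, ha⟩ := Finset.mem_image.mp this
    exact ⟨a, ha⟩
  -- second matching
  set t₂ : ↥A → Finset V := fun a => ((G.neighborSet ↑a).toFinset).erase (f a) with ht₂
  have hcard₂ : ∀ a : ↥A, (t₂ a).card = k - 1 := by
    intro a
    rw [ht₂]
    simp only
    rw [Finset.card_erase_of_mem (hf a), hdeg]
  have hbound₂ : ∀ (b : V) (s : Finset ↥A), ((s.filter (fun a => b ∈ t₂ a)).card) ≤ k - 1 := by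
    intro b s
    by_cases hbB : b ∈ B
    · obtain ⟨a₀, ha₀⟩ := hsurj b hbB
      have htar : ((G.neighborSet b).toFinset.erase ↑a₀).card = k - 1 := by
        rw [Finset.card_erase_of_mem, hdeg]
        rw [hmemN]
        exact (ha₀ ▸ hfadj a₀ : G.Adj ↑a₀ b).symm
      rw [← htar]
      apply Finset.card_le_card_of_injOn (f := fun (a : ↥A) => (a : V))
      · intro a ha
        simp only [Finset.mem_coe] at ha ⊢
        obtain ⟨_, hmem⟩ := Finset.mem_filter.mp ha
        obtain ⟨hne, hmem'⟩ := Finset.mem_erase.mp hmem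
        rw [Finset.mem_erase]
        constructor
        · intro h
          exact hne (by rw [← ha₀]; exact (congrArg f (Subtype.ext h)).symm ▸ rfl)
        · rw [hmemN]
          exact ((hmemN _ _).mp hmem').symm
      · intro a _ a' _ h
        exact Subtype.ext h
    · have : s.filter (fun a => b ∈ t₂ a) = ∅ := by
        apply Finset.filter_eq_empty_iff.mpr
        intro a _ hmem
        obtain ⟨_, hmem'⟩ := Finset.mem_erase.mp hmem
        exact hbB (adjAB ((hmemN _ _).mp hmem') a.2)
      rw [this]
      simp
  obtain ⟨g, ginj, hg⟩ := (Finset.all_card_le_biUnion_card_iff_exists_injective t₂).mp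
    (hall_cond t₂ (k-1) (by omega) (fun a => (hcard₂ a).ge) hbound₂)
  have hgN : ∀ a : ↥A, g a ∈ (G.neighborSet ↑a).toFinset := fun a =>
    (Finset.mem_erase.mp (hg a)).2
  have hgadj : ∀ a : ↥A, G.Adj ↑a (g a) := fun a => (hmemN _ _).mp (hgN a)
  have hgf : ∀ a : ↥A, g a ≠ f a := fun a => (Finset.mem_erase.mp (hg a)).1
  have hgB : ∀ a : ↥A, g a ∈ B := fun a => adjAB (hgadj a) a.2
  -- build the equivalences
  have hbijcard : Fintype.card ↥A = Fintype.card ↥B := by rw [hAcard, hBcard]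
  let fB : ↥A → ↥B := fun a => ⟨f a, hfB a⟩
  let gB : ↥A → ↥B := fun a => ⟨g a, hgB a⟩
  have fBinj : Function.Injective fB := fun a a' h => finj (congrArg Subtype.val h)
  have gBinj : Function.Injective gB := fun a a' h => ginj (congrArg Subtype.val h)
  let μ₁ : ↥A ≃ ↥B := Equiv.ofBijective fB
    ((Fintype.bijective_iff_injective_and_card fB).mpr ⟨fBinj, hbijcard⟩)
  let μ₂ : ↥A ≃ ↥B := Equiv.ofBijective gB
    ((Fintype.bijective_iff_injective_and_card gB).mpr ⟨gBinj, hbijcard⟩)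
  exact ⟨μ₁, μ₂, fun a => hfadj a, fun a => hgadj a, fun a h => hgf a (by simpa [μ₁, μ₂, fB, gB] using h.symm)⟩

lemma bound_2k [Fintype V] [DecidableEq V]
    (G : SimpleGraph V) (A B : Set V) (n k : ℕ) (hk : 4 ≤ k)
    (hdisj : Disjoint A B) (hcover : A ∪ B = Set.univ)
    (hbip : ∀ x y : V, G.Adj x y → (x ∈ A ∧ y ∈ B) ∨ (x ∈ B ∧ y ∈ A))
    (hA : A.ncard = n) (hB : B.ncard = n)
    (hreg : ∀ v : V, (G.neighborSet v).ncard = k) :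
    chiVI G ≤ 2 * k := by
  classical
  have side : ∀ v : V, v ∈ A ∨ v ∈ B := fun v => by
    have : v ∈ A ∪ B := by rw [hcover]; trivial
    exact this
  have hAB : ∀ v ∈ A, v ∉ B := fun v hv => Set.disjoint_left.mp hdisj hv
  have hBA : ∀ v ∈ B, v ∉ A := fun v hv hv' => Set.disjoint_left.mp hdisj hv' hv
  have adjAB : ∀ {x y : V}, G.Adj x y → x ∈ A → y ∈ B := by
    intro x y hxy hx
    rcases hbip x y hxy with ⟨_, h⟩ | ⟨h, _⟩
    · exact h
    · exact absurd hx (hBA x h)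
  have adjBA : ∀ {x y : V}, G.Adj x y → x ∈ B → y ∈ A := by
    intro x y hxy hx
    rcases hbip x y hxy with ⟨h, _⟩ | ⟨_, h⟩
    · exact absurd hx (hAB x h)
    · exact h
  have hdeg : ∀ v : V, (G.neighborSet v).toFinset.card = k := by
    intro v
    rw [← Set.ncard_eq_toFinset_card']
    exact hreg v
  have hmemN : ∀ v w : V, w ∈ (G.neighborSet v).toFinset ↔ G.Adj v w := by
    intro v w
    rw [Set.mem_toFinset]
    rfl
  have hkpos : (0 : ℕ) < k := by omega
  obtain ⟨μ₁, μ₂, hm1, hm2, hm12⟩ :=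
    exists_two_matchings G A B n k (by omega) hdisj hcover hbip hA hB hreg
  -- permutation on B and its coloring
  let π : Equiv.Perm ↥B := μ₂.symm.trans μ₁
  have hπapp : ∀ b : ↥B, π b = μ₁ (μ₂.symm b) := fun b => rfl
  have hπfree : ∀ b : ↥B, π b ≠ b := by
    intro b h
    apply hm12 (μ₂.symm b)
    have h2 : μ₁ (μ₂.symm b) = μ₂ (μ₂.symm b) := by
      rw [Equiv.apply_symm_apply]
      exact h
    exact congrArg Subtype.val h2
  obtain ⟨x, hx⟩ := perm_coloring (Finset.univ : Finset ↥B).card π Finset.univ le_rfl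
    (fun b _ => Finset.mem_univ _) (fun b _ => hπfree b)
  have hx' : ∀ b : ↥B, x b ≠ x (π b) := fun b => hx b (Finset.mem_univ b)
  -- permutation on A and its coloring
  let ρ : Equiv.Perm ↥A := μ₂.trans μ₁.symm
  have hρapp : ∀ a : ↥A, ρ a = μ₁.symm (μ₂ a) := fun a => rfl
  have hρfree : ∀ a : ↥A, ρ a ≠ a := by
    intro a h
    apply hm12 a
    have h2 : μ₁ (μ₁.symm (μ₂ a)) = μ₁ a := congrArg μ₁ h
    rw [Equiv.apply_symm_apply] at h2
    exact congrArg Subtype.val h2.symm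
  obtain ⟨u, hu⟩ := perm_coloring (Finset.univ : Finset ↥A).card ρ Finset.univ le_rfl
    (fun a _ => Finset.mem_univ _) (fun a _ => hρfree a)
  have hu' : ∀ a : ↥A, u a ≠ u (ρ a) := fun a => hu a (Finset.mem_univ a)
  -- embedding of Fin 3 into Fin k
  let emb : Fin 3 → Fin k := fun t => ⟨t.val, lt_of_lt_of_le t.isLt (by omega)⟩
  have embinj : Function.Injective emb := by
    intro s t h
    have : (emb s).val = (emb t).val := congrArg Fin.val h
    exact Fin.ext this
  -- distinctness of matched partners
  have hdistB : ∀ b : ↥B, (↑(μ₁.symm b) : V) ≠ ↑(μ₂.symm b) := by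
    intro b hvals
    apply hπfree b
    rw [hπapp, ← Subtype.ext hvals, Equiv.apply_symm_apply]
  -- adjacency of matched partners, B-side viewpoint
  have hadjB1 : ∀ b : ↥B, G.Adj ↑b ↑(μ₁.symm b) := by
    intro b
    have := hm1 (μ₁.symm b)
    rw [Equiv.apply_symm_apply] at this
    exact this.symm
  have hadjB2 : ∀ b : ↥B, G.Adj ↑b ↑(μ₂.symm b) := by
    intro b
    have := hm2 (μ₂.symm b)
    rw [Equiv.apply_symm_apply] at this
    exact this.symm
  -- the B-side labelings
  have hlabB : ∀ b : ↥B, ∃ fb : V → Fin k,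
      Set.InjOn fb ↑((G.neighborSet (↑b : V)).toFinset) ∧
      fb ↑(μ₁.symm b) = emb (x b) ∧ fb ↑(μ₂.symm b) = emb (x (π b)) := by
    intro b
    apply exists_labeling _ k (hdeg ↑b)
    · exact (hmemN _ _).mpr (hadjB1 b)
    · exact (hmemN _ _).mpr (hadjB2 b)
    · exact hdistB b
    · exact fun h => hx' b (embinj h)
  choose labB hlabBinj hlabB1 hlabB2 using hlabB
  -- the A-side labelings
  have hlabA : ∀ a : ↥A, ∃ fa : V → Fin k,
      Set.InjOn fa ↑((G.neighborSet (↑a : V)).toFinset) ∧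
      fa ↑(μ₁ a) = emb (u a) ∧ fa ↑(μ₂ a) = emb (u (ρ a)) := by
    intro a
    apply exists_labeling _ k (hdeg ↑a)
    · exact (hmemN _ _).mpr (hm1 a)
    · exact (hmemN _ _).mpr (hm2 a)
    · exact hm12 a
    · exact fun h => hu' a (embinj h)
  choose labA hlabAinj hlabA1 hlabA2 using hlabA
  -- globalized labelings
  let junk : Fin k := ⟨0, hkpos⟩
  let labA' : V → V → Fin k := fun v => if h : v ∈ A then labA ⟨v, h⟩ else fun _ => junk
  let labB' : V → V → Fin k := fun v => if h : v ∈ B then labB ⟨v, h⟩ else fun _ => junk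
  have hlabA'eq : ∀ (v : V) (h : v ∈ A), labA' v = labA ⟨v, h⟩ := fun v h => dif_pos h
  have hlabB'eq : ∀ (v : V) (h : v ∈ B), labB' v = labB ⟨v, h⟩ := fun v h => dif_pos h
  -- missing colors for A-vertices (from the B-palette)
  have hmA : ∀ a : ↥A, ∃ m : Fin k, ∀ w ∈ (G.neighborSet (↑a : V)).toFinset,
      labB' w ↑a ≠ m := by
    intro a
    apply exists_missing _ (fun w => labB' w ↑a) (by rw [hdeg]; simp)
      ↑(μ₁ a) ↑(μ₂ a) ((hmemN _ _).mpr (hm1 a)) ((hmemN _ _).mpr (hm2 a)) (hm12 a)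
    -- equal values
    have e1 : labB' ↑(μ₁ a) ↑a = emb (x (μ₁ a)) := by
      rw [hlabB'eq ↑(μ₁ a) (μ₁ a).2]
      have := hlabB1 (μ₁ a)
      rw [Equiv.symm_apply_apply] at this
      rw [Subtype.coe_eta]
      exact this
    have e2 : labB' ↑(μ₂ a) ↑a = emb (x (μ₁ a)) := by
      rw [hlabB'eq ↑(μ₂ a) (μ₂ a).2]
      have := hlabB2 (μ₂ a)
      rw [Equiv.symm_apply_apply] at this
      rw [Subtype.coe_eta]
      rw [this, hπapp, Equiv.symm_apply_apply]
    rw [e1, e2]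
  choose mA hmA' using hmA
  -- missing colors for B-vertices (from the A-palette)
  have hmB : ∀ b : ↥B, ∃ m : Fin k, ∀ w ∈ (G.neighborSet (↑b : V)).toFinset,
      labA' w ↑b ≠ m := by
    intro b
    apply exists_missing _ (fun w => labA' w ↑b) (by rw [hdeg]; simp)
      ↑(μ₁.symm b) ↑(μ₂.symm b) ((hmemN _ _).mpr (hadjB1 b)) ((hmemN _ _).mpr (hadjB2 b))
      (hdistB b)
    have e1 : labA' ↑(μ₁.symm b) ↑b = emb (u (μ₁.symm b)) := by
      rw [hlabA'eq ↑(μ₁.symm b) (μ₁.symm b).2]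
      have := hlabA1 (μ₁.symm b)
      rw [Equiv.apply_symm_apply] at this
      rw [Subtype.coe_eta]
      exact this
    have e2 : labA' ↑(μ₂.symm b) ↑b = emb (u (μ₁.symm b)) := by
      rw [hlabA'eq ↑(μ₂.symm b) (μ₂.symm b).2]
      have := hlabA2 (μ₂.symm b)
      rw [Equiv.apply_symm_apply] at this
      rw [Subtype.coe_eta]
      rw [this, hρapp, Equiv.apply_symm_apply]
    rw [e1, e2]
  choose mB hmB' using hmB
  -- incidence structure helpers
  let oth : Inc G → V := fun inc => Sym2.Mem.other inc.2.2
  have oth_spec : ∀ inc : Inc G, inc.1.2 = s(inc.1.1, oth inc) :=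
    fun inc => (Sym2.other_spec inc.2.2).symm
  have oth_adj : ∀ inc : Inc G, G.Adj inc.1.1 (oth inc) := fun inc => by
    rw [← SimpleGraph.mem_edgeSet, ← oth_spec inc]; exact inc.2.1
  -- the coloring
  let cV : V → (Fin k ⊕ Fin k) := fun v =>
    if h : v ∈ A then Sum.inr (mA ⟨v, h⟩)
    else if h' : v ∈ B then Sum.inl (mB ⟨v, h'⟩) else Sum.inl junk
  let cI : Inc G → (Fin k ⊕ Fin k) := fun inc =>
    if inc.1.1 ∈ A then Sum.inl (labA' inc.1.1 (oth inc))
    else Sum.inr (labB' inc.1.1 (oth inc))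
  apply chiVI_le_card (X := Fin k ⊕ Fin k) (by simp; omega) (Sum.elim cV cI)
  have key2 : ∀ (w : V) (inc : Inc G), w ∈ inc.1.2 → cV w ≠ cI inc := by
    intro w inc hw
    have hadj := oth_adj inc
    rw [oth_spec inc, Sym2.mem_iff] at hw
    rcases side inc.1.1 with hvA | hvB
    · have hoB : oth inc ∈ B := adjAB hadj hvA
      have hcI : cI inc = Sum.inl (labA' inc.1.1 (oth inc)) := if_pos hvA
      rcases hw with rfl | rfl
      · rw [hcI]
        simp only [cV, dif_pos hvA]
        simp
      · -- w = oth inc ∈ B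
        rw [hcI]
        simp only [cV, dif_neg (hBA _ hoB), dif_pos hoB]
        simp only [ne_eq, Sum.inl.injEq]
        intro hcc
        exact hmB' ⟨oth inc, hoB⟩ inc.1.1 ((hmemN _ _).mpr hadj.symm) hcc.symm
    · have hoA : oth inc ∈ A := adjBA hadj hvB
      have hcI : cI inc = Sum.inr (labB' inc.1.1 (oth inc)) := if_neg (hBA _ hvB)
      rcases hw with rfl | rfl
      · rw [hcI]
        simp only [cV, dif_neg (hBA _ hvB), dif_pos hvB]
        simp
      · rw [hcI]
        simp only [cV, dif_pos hoA]
        simp only [ne_eq, Sum.inr.injEq]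
        intro hcc
        exact hmA' ⟨oth inc, hoA⟩ inc.1.1 ((hmemN _ _).mpr hadj.symm) hcc.symm
  intro a b hab
  rcases a with w | i <;> rcases b with w' | j <;>
    simp only [Sum.elim_inl, Sum.elim_inr]
  · have hadj : G.Adj w w' := hab
    rcases side w with huA | huB <;> rcases side w' with hwA | hwB
    · exact absurd (adjAB hadj huA) (hAB w' hwA)
    · simp only [cV, dif_pos huA, dif_neg (hBA w' hwB), dif_pos hwB]
      simp
    · simp only [cV, dif_neg (hBA w huB), dif_pos huB, dif_pos hwA]
      simp
    · exact absurd (adjBA hadj huB) (fun h => hAB w' h hwB)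
  · exact key2 w j hab
  · exact fun hcc => key2 w' i hab hcc.symm
  · -- incidence / incidence
    obtain ⟨hij, hcase⟩ := hab
    have hadi := oth_adj i
    have hadj2 := oth_adj j
    rcases hcase with hvv | hee | hs | hs
    · -- same first vertex
      have he : i.1.2 ≠ j.1.2 := fun he => hij (Subtype.ext (Prod.ext hvv he))
      have ho : oth i ≠ oth j := by
        intro ho; exact he (by rw [oth_spec i, oth_spec j, hvv, ho])
      rcases side i.1.1 with hA1 | hB1
      · have hA2 : j.1.1 ∈ A := hvv ▸ hA1
        simp only [cI, if_pos hA1, if_pos hA2]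
        rw [← hvv]
        simp only [ne_eq, Sum.inl.injEq]
        intro hcc
        rw [hlabA'eq i.1.1 hA1] at hcc
        apply ho
        have hadj2' : G.Adj i.1.1 (oth j) := by rw [hvv]; exact hadj2
        exact hlabAinj ⟨i.1.1, hA1⟩ ((hmemN _ _).mpr hadi)
          ((hmemN _ _).mpr hadj2') hcc
      · have hB2 : j.1.1 ∈ B := hvv ▸ hB1
        simp only [cI, if_neg (hBA _ hB1), if_neg (hBA _ hB2)]
        rw [← hvv]
        simp only [ne_eq, Sum.inr.injEq]
        intro hcc
        rw [hlabB'eq i.1.1 hB1] at hcc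
        apply ho
        have hadj2' : G.Adj i.1.1 (oth j) := by rw [hvv]; exact hadj2
        exact hlabBinj ⟨i.1.1, hB1⟩ ((hmemN _ _).mpr hadi)
          ((hmemN _ _).mpr hadj2') hcc
    · -- same edge: first vertices are the two (adjacent) endpoints
      have hv12 : i.1.1 ≠ j.1.1 := fun h => hij (Subtype.ext (Prod.ext h hee))
      have hj_mem : j.1.1 ∈ i.1.2 := by rw [hee]; exact j.2.2
      rw [oth_spec i, Sym2.mem_iff] at hj_mem
      have hji : j.1.1 = oth i := hj_mem.resolve_left (fun h => hv12 h.symm)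
      have hadj12 : G.Adj i.1.1 j.1.1 := hji ▸ hadi
      rcases side i.1.1 with hA1 | hB1
      · have hB2 : j.1.1 ∈ B := adjAB hadj12 hA1
        simp only [cI, if_pos hA1, if_neg (hBA _ hB2)]
        simp
      · have hA2 : j.1.1 ∈ A := adjBA hadj12 hB1
        simp only [cI, if_neg (hBA _ hB1), if_pos hA2]
        simp
    · -- s(v1, v2) = e1
      have hadj12 : G.Adj i.1.1 j.1.1 := by
        rw [← SimpleGraph.mem_edgeSet, hs]; exact i.2.1
      rcases side i.1.1 with hA1 | hB1
      · have hB2 : j.1.1 ∈ B := adjAB hadj12 hA1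
        simp only [cI, if_pos hA1, if_neg (hBA _ hB2)]
        simp
      · have hA2 : j.1.1 ∈ A := adjBA hadj12 hB1
        simp only [cI, if_neg (hBA _ hB1), if_pos hA2]
        simp
    · -- s(v1, v2) = e2
      have hadj12 : G.Adj i.1.1 j.1.1 := by
        rw [← SimpleGraph.mem_edgeSet, hs]; exact j.2.1
      rcases side i.1.1 with hA1 | hB1
      · have hB2 : j.1.1 ∈ B := adjAB hadj12 hA1
        simp only [cI, if_pos hA1, if_neg (hBA _ hB2)]
        simp
      · have hA2 : j.1.1 ∈ A := adjBA hadj12 hB1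
        simp only [cI, if_neg (hBA _ hB1), if_pos hA2]
        simp

/-- Let `G` be a `k`-regular bipartite finite simple graph with `k ≥ 4`
whose two parts `A` and `B` each have `n` vertices. Then `χ_vi(G) ≤ min {n+3, 2k}`. -/
theorem chiVI_regular_bipartite {V : Type*} [Fintype V] [DecidableEq V]
    (G : SimpleGraph V) (A B : Set V) (n k : ℕ) (hk : 4 ≤ k)
    (hdisj : Disjoint A B) (hcover : A ∪ B = Set.univ)
    (hbip : ∀ x y : V, G.Adj x y → (x ∈ A ∧ y ∈ B) ∨ (x ∈ B ∧ y ∈ A))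
    (hA : A.ncard = n) (hB : B.ncard = n)
    (hreg : ∀ v : V, (G.neighborSet v).ncard = k) :
    chiVI G ≤ min (n + 3) (2 * k) := by
  classical
  by_cases hV : Nonempty V
  · obtain ⟨v⟩ := hV
    have hside : v ∈ A ∨ v ∈ B := by
      have : v ∈ A ∪ B := by rw [hcover]; trivial
      exact this
    have hAB : ∀ w ∈ A, w ∉ B := fun w hw => Set.disjoint_left.mp hdisj hw
    have hBA : ∀ w ∈ B, w ∉ A := fun w hw hw' => Set.disjoint_left.mp hdisj hw' hw
    have hkn : 4 ≤ n := by
      rcases hside with hvA | hvB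
      · have hsub : G.neighborSet v ⊆ B := by
          intro w hw
          rcases hbip v w hw with ⟨_, h⟩ | ⟨h, _⟩
          · exact h
          · exact absurd hvA (hBA v h)
        have hle := Set.ncard_le_ncard hsub B.toFinite
        rw [hreg v, hB] at hle
        omega
      · have hsub : G.neighborSet v ⊆ A := by
          intro w hw
          rcases hbip v w hw with ⟨h, _⟩ | ⟨_, h⟩
          · exact absurd hvB (hAB v h)
          · exact h
        have hle := Set.ncard_le_ncard hsub A.toFinite
        rw [hreg v, hA] at hle
        omega
    exact le_min (bound_nplus3 G A B n hkn hdisj hcover hbip hA hB)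
      (bound_2k G A B n k hk hdisj hcover hbip hA hB hreg)
  · haveI : IsEmpty V := not_nonempty_iff.mp hV
    have h0 : chiVI G ≤ 0 := by
      apply chiVI_le_card (X := Fin 0) rfl
        (fun z => match z with
          | Sum.inl v => isEmptyElim v
          | Sum.inr i => isEmptyElim i.1.1)
      intro a b _
      rcases a with v | i
      · exact isEmptyElim v
      · exact isEmptyElim i.1.1
    exact le_trans h0 (Nat.zero_le _)
end

section
/- Let G be a bipartite finite simple graph with maximum degree Δ ≥ 4. Then χ_vi(G) ≤ 2Δ. -/
open SimpleGraph

variable {V : Type*}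

section Auxiliary


private lemma fg3_aux {α : Type*} [DecidableEq α] (f : α → α) (s : Finset α) :
    ∃ M : α → Fin 3, ∀ x ∈ s, f x ∈ s → f x ≠ x → M x ≠ M (f x) := by
  induction s using Finset.strongInductionOn with
  | _ s ih =>
    rcases eq_or_ne s ∅ with rfl | hne
    · exact ⟨fun _ => 0, by simp⟩
    set d : α → ℕ := fun x =>
      (if f x ∈ s ∧ f x ≠ x then 1 else 0) + ((s.erase x).filter (fun y => f y = x)).card
      with hd
    set T : Finset α := s.filter (fun y => f y ∈ s ∧ f y ≠ y) with hT
    have hfiber : ∀ x ∈ s, (s.erase x).filter (fun y => f y = x)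
        = T.filter (fun y => f y = x) := by
      intro x hx
      ext y
      simp only [Finset.mem_filter, Finset.mem_erase, hT]
      constructor
      · rintro ⟨⟨hyx, hys⟩, hfy⟩
        exact ⟨⟨hys, by rw [hfy]; exact ⟨hx, Ne.symm hyx⟩⟩, hfy⟩
      · rintro ⟨⟨hys, _, hne'⟩, hfy⟩
        exact ⟨⟨by rintro rfl; exact hne' hfy, hys⟩, hfy⟩
    have hsum : ∑ x ∈ s, d x ≤ 2 * s.card := by
      have h1 : ∑ x ∈ s, (if f x ∈ s ∧ f x ≠ x then 1 else 0) = T.card := by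
        rw [hT, Finset.card_filter]
      have h2 : ∑ x ∈ s, ((s.erase x).filter (fun y => f y = x)).card = T.card := by
        rw [Finset.sum_congr rfl (fun x hx => by rw [hfiber x hx])]
        exact (Finset.card_eq_sum_card_fiberwise (fun y hy => (Finset.mem_filter.mp hy).2.1)).symm
      have hTs : T.card ≤ s.card := Finset.card_le_card (Finset.filter_subset _ _)
      calc ∑ x ∈ s, d x = T.card + T.card := by
            rw [hd]; rw [Finset.sum_add_distrib, h1, h2]
        _ ≤ 2 * s.card := by omega
    have hex : ∃ x₀ ∈ s, d x₀ ≤ 2 := by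
      by_contra h
      push_neg at h
      have h3 : 3 * s.card ≤ ∑ x ∈ s, d x := by
        calc 3 * s.card = ∑ _x ∈ s, 3 := by rw [Finset.sum_const, smul_eq_mul, mul_comm]
          _ ≤ ∑ x ∈ s, d x := Finset.sum_le_sum (fun x hx => h x hx)
      have hpos : 0 < s.card := Finset.card_pos.mpr (Finset.nonempty_iff_ne_empty.mpr hne)
      omega
    obtain ⟨x₀, hx₀, hdx₀⟩ := hex
    obtain ⟨M', hM'⟩ := ih (s.erase x₀) (Finset.erase_ssubset hx₀)
    set P : Finset α := (s.erase x₀).filter (fun y => f y = x₀) with hP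
    set forb : Finset (Fin 3) :=
      (if f x₀ ∈ s ∧ f x₀ ≠ x₀ then {M' (f x₀)} else ∅) ∪ P.image M' with hforb
    have hcard : forb.card ≤ 2 := by
      have hc1 : (if f x₀ ∈ s ∧ f x₀ ≠ x₀ then ({M' (f x₀)} : Finset (Fin 3)) else ∅).card
          ≤ (if f x₀ ∈ s ∧ f x₀ ≠ x₀ then 1 else 0) := by
        split <;> simp
      have hc2 : (P.image M').card ≤ P.card := Finset.card_image_le
      have := Finset.card_union_le
        (if f x₀ ∈ s ∧ f x₀ ≠ x₀ then ({M' (f x₀)} : Finset (Fin 3)) else ∅) (P.image M')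
      have hdx₀' : (if f x₀ ∈ s ∧ f x₀ ≠ x₀ then 1 else 0) + P.card ≤ 2 := hdx₀
      rw [hforb]
      omega
    have hcex : ∃ c : Fin 3, c ∉ forb := by
      by_contra h
      push_neg at h
      have hsub : (Finset.univ : Finset (Fin 3)) ⊆ forb := fun c _ => h c
      have := Finset.card_le_card hsub
      simp only [Finset.card_univ, Fintype.card_fin] at this
      omega
    obtain ⟨c, hc⟩ := hcex
    refine ⟨Function.update M' x₀ c, ?_⟩
    intro x hx hfx hnefx
    rcases eq_or_ne x x₀ with rfl | hxx
    · rw [Function.update_self, Function.update_of_ne hnefx]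
      intro heq
      apply hc
      rw [hforb]
      apply Finset.mem_union_left
      rw [if_pos ⟨hfx, hnefx⟩]
      simp [heq]
    · rw [Function.update_of_ne hxx]
      rcases eq_or_ne (f x) x₀ with hfx0 | hfxne
      · rw [hfx0, Function.update_self]
        intro heq
        apply hc
        rw [hforb]
        apply Finset.mem_union_right
        exact Finset.mem_image.mpr ⟨x, Finset.mem_filter.mpr
          ⟨Finset.mem_erase.mpr ⟨hxx, hx⟩, hfx0⟩, heq⟩
      · rw [Function.update_of_ne hfxne]
        exact hM' x (Finset.mem_erase.mpr ⟨hxx, hx⟩) (Finset.mem_erase.mpr ⟨hfxne, hfx⟩) hnefx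

lemma fg3 {α : Type*} [Fintype α] [DecidableEq α] (f : α → α) :
    ∃ M : α → Fin 3, ∀ x, f x ≠ x → M x ≠ M (f x) := by
  obtain ⟨M, hM⟩ := fg3_aux f Finset.univ
  exact ⟨M, fun x hx => hM x (Finset.mem_univ x) (Finset.mem_univ _) hx⟩

lemma key_lemma {V : Type*} [Fintype V] [DecidableEq V] (G : SimpleGraph V)
    [DecidableRel G.Adj] {Δ : ℕ} (hΔ : 3 ≤ Δ) (hdeg : ∀ x, G.degree x ≤ Δ) :
    ∃ (M : V → Fin Δ) (ε : V → V → Fin Δ),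
      (∀ u v, G.Adj u v → ε u v ≠ M v) ∧
      (∀ u v w, G.Adj u v → G.Adj u w → v ≠ w → ε u v ≠ ε u w) := by
  have hΔ0 : 0 < Δ := by omega
  -- Step 1: SDR for the neighborhoods of full-degree vertices
  have hall1 : ∀ W : Finset {u : V // G.degree u = Δ},
      W.card ≤ (W.biUnion fun u => G.neighborFinset u.1).card := by
    intro W
    set U := W.biUnion fun u => G.neighborFinset u.1 with hU
    have hsub : ∀ u ∈ W, G.neighborFinset u.1 ⊆ U :=
      fun u hu => Finset.subset_biUnion_of_mem (fun u => G.neighborFinset u.1) hu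
    have h1 : Δ * W.card = ∑ u ∈ W, (G.neighborFinset u.1).card := by
      rw [Finset.sum_congr rfl (fun u _ => (show (G.neighborFinset u.1).card = Δ from u.2)),
        Finset.sum_const, smul_eq_mul, mul_comm]
    have h2 : ∑ u ∈ W, (G.neighborFinset u.1).card
        = ∑ x ∈ U, (W.filter (fun u => x ∈ G.neighborFinset u.1)).card := by
      have e1 : ∀ u ∈ W, (G.neighborFinset u.1).card
          = ∑ x ∈ U, (if x ∈ G.neighborFinset u.1 then 1 else 0) := by
        intro u hu
        rw [← Finset.card_filter, Finset.filter_mem_eq_inter,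
          Finset.inter_eq_right.mpr (hsub u hu)]
      rw [Finset.sum_congr rfl e1, Finset.sum_comm]
      exact Finset.sum_congr rfl fun x _ => (Finset.card_filter _ _).symm
    have h3 : ∀ x ∈ U, (W.filter (fun u => x ∈ G.neighborFinset u.1)).card ≤ Δ := by
      intro x _
      have : (W.filter (fun u => x ∈ G.neighborFinset u.1)).card
          ≤ (G.neighborFinset x).card := by
        apply Finset.card_le_card_of_injOn (fun u => u.1)
        · intro u hu
          simp only [Finset.mem_coe, Finset.mem_filter] at hu ⊢
          rw [mem_neighborFinset] at hu ⊢
          exact hu.2.symm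
        · intro a _ b _ hab
          exact Subtype.ext hab
      exact this.trans (hdeg x)
    have h4 : Δ * W.card ≤ Δ * U.card := by
      rw [h1, h2]
      calc ∑ x ∈ U, (W.filter (fun u => x ∈ G.neighborFinset u.1)).card
          ≤ ∑ _x ∈ U, Δ := Finset.sum_le_sum h3
        _ = Δ * U.card := by rw [Finset.sum_const, smul_eq_mul, mul_comm]
    exact Nat.le_of_mul_le_mul_left h4 hΔ0
  obtain ⟨r, hrinj, hrmem⟩ :=
    (Finset.all_card_le_biUnion_card_iff_exists_injective
      (fun u : {u : V // G.degree u = Δ} => G.neighborFinset u.1)).mp hall1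
  -- Step 2: second neighbor
  have hsex : ∀ u : {u : V // G.degree u = Δ},
      ∃ x, x ∈ (G.neighborFinset u.1).erase (r u) := by
    intro u
    apply Finset.card_pos.mp
    rw [Finset.card_erase_of_mem (hrmem u)]
    have : (G.neighborFinset u.1).card = Δ := u.2
    omega
  choose sfn hsfn using hsex
  -- Step 3: the functional graph and its 3-coloring
  set f : V → V := fun x => if h : ∃ u, r u = x then sfn h.choose else x with hf
  have hfr : ∀ u, f (r u) = sfn u := by
    intro u
    have h : ∃ u', r u' = r u := ⟨u, rfl⟩
    have : h.choose = u := hrinj h.choose_spec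
    rw [hf]
    simp only [dif_pos h, this]
  obtain ⟨M₃, hM₃⟩ := fg3 f
  set M : V → Fin Δ := fun x => Fin.castLE hΔ (M₃ x) with hM
  have hfull : ∀ u : V, G.degree u = Δ → ∃ a ∈ G.neighborFinset u,
      ∃ b ∈ G.neighborFinset u, M a ≠ M b := by
    intro u hu
    set u' : {u : V // G.degree u = Δ} := ⟨u, hu⟩
    have hb := hsfn u'
    rw [Finset.mem_erase] at hb
    refine ⟨r u', hrmem u', sfn u', hb.2, ?_⟩
    have : f (r u') ≠ r u' := by rw [hfr]; exact hb.1
    have h3 := hM₃ (r u') this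
    rw [hfr] at h3
    intro hMeq
    exact h3 (Fin.castLE_injective hΔ hMeq)
  -- Step 4: rows by Hall, one per vertex
  have hrow : ∀ u : V, ∃ g : {v // v ∈ G.neighborFinset u} → Fin Δ,
      Function.Injective g ∧ ∀ v, g v ≠ M v.1 := by
    intro u
    have hall2 : ∀ s : Finset {v // v ∈ G.neighborFinset u},
        s.card ≤ (s.biUnion fun v => Finset.univ.erase (M v.1)).card := by
      intro s
      rcases Finset.eq_empty_or_nonempty s with rfl | ⟨v₀, hv₀⟩
      · simp
      have hcards : s.card ≤ Δ := by
        calc s.card ≤ Fintype.card {v // v ∈ G.neighborFinset u} := Finset.card_le_univ s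
          _ = (G.neighborFinset u).card := Fintype.card_coe _
          _ ≤ Δ := hdeg u
      by_cases hcon : ∃ v₁ ∈ s, M v₁.1 ≠ M v₀.1
      · obtain ⟨v₁, hv₁, hne⟩ := hcon
        have : (s.biUnion fun v => Finset.univ.erase (M v.1)) = Finset.univ := by
          apply Finset.eq_univ_iff_forall.mpr
          intro c
          rcases eq_or_ne c (M v₀.1) with rfl | hc
          · exact Finset.mem_biUnion.mpr ⟨v₁, hv₁,
              Finset.mem_erase.mpr ⟨Ne.symm hne, Finset.mem_univ _⟩⟩
          · exact Finset.mem_biUnion.mpr ⟨v₀, hv₀,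
              Finset.mem_erase.mpr ⟨hc, Finset.mem_univ _⟩⟩
        rw [this, Finset.card_univ, Fintype.card_fin]
        exact hcards
      · push_neg at hcon
        have hsmall : s.card ≤ Δ - 1 := by
          by_contra hbig
          push_neg at hbig
          have hcard : s.card = Δ := by omega
          have hdu : G.degree u = Δ := by
            have := Finset.card_le_univ s
            rw [Fintype.card_coe] at this
            have h5 := hdeg u
            unfold SimpleGraph.degree at h5 ⊢
            omega
          have hsuniv : s = Finset.univ := by
            apply Finset.eq_univ_of_card
            rw [Fintype.card_coe]
            unfold SimpleGraph.degree at hdu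
            omega
          obtain ⟨a, ha, b, hb, hab⟩ := hfull u hdu
          have h6 := hcon ⟨a, ha⟩ (hsuniv ▸ Finset.mem_univ _)
          have h7 := hcon ⟨b, hb⟩ (hsuniv ▸ Finset.mem_univ _)
          exact hab (h6.trans h7.symm)
        calc s.card ≤ Δ - 1 := hsmall
          _ = (Finset.univ.erase (M v₀.1)).card := by
              rw [Finset.card_erase_of_mem (Finset.mem_univ _), Finset.card_univ,
                Fintype.card_fin]
          _ ≤ _ := Finset.card_le_card
              (Finset.subset_biUnion_of_mem (fun v => Finset.univ.erase (M v.1)) hv₀)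
    obtain ⟨g, hginj, hgmem⟩ :=
      (Finset.all_card_le_biUnion_card_iff_exists_injective
        (fun v : {v // v ∈ G.neighborFinset u} => Finset.univ.erase (M v.1))).mp hall2
    exact ⟨g, hginj, fun v => (Finset.mem_erase.mp (hgmem v)).1⟩
  choose g hginj hgavoid using hrow
  refine ⟨M, fun u v => if h : v ∈ G.neighborFinset u then g u ⟨v, h⟩ else ⟨0, hΔ0⟩, ?_, ?_⟩
  · intro u v huv
    have h : v ∈ G.neighborFinset u := (mem_neighborFinset G u v).mpr huv
    simp only [dif_pos h]
    exact hgavoid u ⟨v, h⟩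
  · intro u v w huv huw hvw
    have hv : v ∈ G.neighborFinset u := (mem_neighborFinset G u v).mpr huv
    have hw : w ∈ G.neighborFinset u := (mem_neighborFinset G u w).mpr huw
    simp only [dif_pos hv, dif_pos hw]
    intro heq
    exact hvw (congrArg Subtype.val (hginj u heq))

end Auxiliary

/-- Let `G` be a bipartite finite simple graph (equivalently, a
2-colorable graph) with maximum degree `Δ ≥ 4`. Then `χ_vi(G) ≤ 2Δ`. -/
theorem chiVI_bipartite {V : Type*} [Fintype V] [DecidableEq V]
    (G : SimpleGraph V) (hbip : G.Colorable 2) (hΔ : 4 ≤ maxDeg G) :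
    chiVI G ≤ 2 * maxDeg G := by
  classical
  haveI : DecidableRel G.Adj := fun a b => Classical.propDecidable _
  obtain ⟨C⟩ := hbip
  set Δ := maxDeg G with hΔdef
  have hdeg : ∀ x, G.degree x ≤ Δ := by
    intro x
    have h1 : (G.neighborSet x).ncard ≤ Δ := by
      rw [hΔdef]
      unfold maxDeg
      exact Finset.le_sup (f := fun v => (G.neighborSet v).ncard) (Finset.mem_univ x)
    have h2 : (G.neighborSet x).ncard = G.degree x := by
      rw [Set.ncard_eq_toFinset_card', ← neighborFinset_def]
      rfl
    omega
  obtain ⟨M, ε, havoid, hrow⟩ := key_lemma G (by omega) hdeg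
  have hΔ0 : 0 < Δ := by omega
  -- other endpoint of an incidence
  set oth : Inc G → V := fun i => Sym2.Mem.other' i.2.2 with hoth
  have hothspec : ∀ i : Inc G, s(i.1.1, oth i) = i.1.2 := fun i => Sym2.other_spec' i.2.2
  have hothadj : ∀ i : Inc G, G.Adj i.1.1 (oth i) := by
    intro i
    have h := i.2.1
    rw [← hothspec i] at h
    exact h
  have hext : ∀ i j : Inc G, i.1.1 = j.1.1 → oth i = oth j → i = j := by
    intro i j h1 h2
    apply Subtype.ext
    apply Prod.ext h1
    rw [← hothspec i, ← hothspec j, h1, h2]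
  -- color embeddings
  set inF : Fin Δ → Fin (2 * Δ) := fun m => ⟨m.1, by have := m.2; omega⟩ with hinF
  set inS : Fin Δ → Fin (2 * Δ) := fun m => ⟨Δ + m.1, by have := m.2; omega⟩ with hinS
  have hFS : ∀ m m' : Fin Δ, inF m ≠ inS m' := by
    intro m m' h
    have h1 := m.2
    have h2 := congrArg Fin.val h
    rw [hinF, hinS] at h2
    simp only at h2
    omega
  have hFinj : ∀ m m' : Fin Δ, inF m = inF m' → m = m' := by
    intro m m' h
    have h2 := congrArg Fin.val h
    rw [hinF] at h2
    simp only at h2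
    exact Fin.ext h2
  have hSinj : ∀ m m' : Fin Δ, inS m = inS m' → m = m' := by
    intro m m' h
    have h2 := congrArg Fin.val h
    rw [hinS] at h2
    simp only at h2
    apply Fin.ext
    omega
  have fin2 : ∀ t : Fin 2, t = 0 ∨ t = 1 := by decide
  -- the coloring
  set c : VIElem G → Fin (2 * Δ) := Sum.elim
    (fun x => if C x = 0 then inS (M x) else inF (M x))
    (fun i => if C i.1.1 = 0 then inF (ε i.1.1 (oth i)) else inS (ε i.1.1 (oth i)))
    with hc
  have hVI : ∀ (u : V) (i : Inc G), u ∈ i.1.2 → c (Sum.inl u) ≠ c (Sum.inr i) := by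
    intro u i hu
    rw [← hothspec i, Sym2.mem_iff] at hu
    rw [hc]
    simp only [Sum.elim_inl, Sum.elim_inr]
    rcases hu with rfl | rfl
    · rcases fin2 (C i.1.1) with h0 | h1
      · rw [if_pos h0, if_pos h0]
        exact Ne.symm (hFS _ _)
      · rw [if_neg (by rw [h1]; exact one_ne_zero), if_neg (by rw [h1]; exact one_ne_zero)]
        exact hFS _ _
    · have hadj := hothadj i
      have hC := C.valid hadj
      rcases fin2 (C i.1.1) with h0 | h1
      · have hC2 : ¬ C (oth i) = 0 := by
          intro h; exact hC (h0.trans h.symm)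
        rw [if_neg hC2, if_pos h0]
        intro heq
        exact havoid i.1.1 (oth i) hadj (hFinj _ _ heq).symm
      · have hC2 : C (oth i) = 0 := by
          rcases fin2 (C (oth i)) with h | h
          · exact h
          · exact absurd (h1.trans h.symm) hC
        rw [if_pos hC2, if_neg (by rw [h1]; exact one_ne_zero)]
        intro heq
        exact havoid i.1.1 (oth i) hadj (hSinj _ _ heq).symm
  refine Nat.sInf_le ⟨c, ?_⟩
  intro a b hab
  match a, b with
  | Sum.inl u, Sum.inl w =>
    have hadj : G.Adj u w := hab
    have hC := C.valid hadj
    rw [hc]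
    simp only [Sum.elim_inl]
    rcases fin2 (C u) with h0 | h1 <;> rcases fin2 (C w) with g0 | g1
    · exact absurd (h0.trans g0.symm) hC
    · rw [if_pos h0, if_neg (by rw [g1]; exact one_ne_zero)]
      exact Ne.symm (hFS _ _)
    · rw [if_neg (by rw [h1]; exact one_ne_zero), if_pos g0]
      exact hFS _ _
    · exact absurd (h1.trans g1.symm) hC
  | Sum.inl u, Sum.inr i => exact hVI u i hab
  | Sum.inr i, Sum.inl u => exact (hVI u i hab).symm
  | Sum.inr i, Sum.inr j =>
    obtain ⟨hne, hrel⟩ := hab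
    have hadji := hothadj i
    have hadjj := hothadj j
    have hcore : C i.1.1 = C j.1.1 → ε i.1.1 (oth i) ≠ ε j.1.1 (oth j) := by
      intro hCC
      rcases hrel with h1 | h2 | h3 | h4
      · have hyw : oth i ≠ oth j := fun heq => hne (hext i j h1 heq)
        have hadj2 : G.Adj i.1.1 (oth j) := by rw [h1]; exact hadjj
        have := hrow i.1.1 (oth i) (oth j) hadji hadj2 hyw
        rw [h1] at this ⊢
        exact this
      · exfalso
        rcases eq_or_ne i.1.1 j.1.1 with hxz | hxz
        · exact hne (Subtype.ext (Prod.ext hxz h2))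
        · have hm : j.1.1 ∈ i.1.2 := by rw [h2]; exact j.2.2
          rw [← hothspec i, Sym2.mem_iff] at hm
          rcases hm with hm | hm
          · exact hxz hm.symm
          · have hadj2 : G.Adj i.1.1 j.1.1 := by rw [hm]; exact hadji
            exact (C.valid hadj2) hCC
      · exfalso
        have hadj2 : G.Adj i.1.1 j.1.1 := by
          have h := i.2.1
          rw [← h3] at h
          exact h
        exact (C.valid hadj2) hCC
      · exfalso
        have hadj2 : G.Adj i.1.1 j.1.1 := by
          have h := j.2.1
          rw [← h4] at h
          exact h
        exact (C.valid hadj2) hCC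
    rw [hc]
    simp only [Sum.elim_inr]
    rcases fin2 (C i.1.1) with h0 | h1 <;> rcases fin2 (C j.1.1) with g0 | g1
    · rw [if_pos h0, if_pos g0]
      intro heq
      exact hcore (h0.trans g0.symm) (hFinj _ _ heq)
    · rw [if_pos h0, if_neg (by rw [g1]; exact one_ne_zero)]
      exact hFS _ _
    · rw [if_neg (by rw [h1]; exact one_ne_zero), if_pos g0]
      exact Ne.symm (hFS _ _)
    · rw [if_neg (by rw [h1]; exact one_ne_zero), if_neg (by rw [g1]; exact one_ne_zero)]
      intro heq
      exact hcore (h1.trans g1.symm) (hSinj _ _ heq)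
end
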